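/- Let d ≥ p ≥ 2, k > p, s ≥ k·d + 1, and let a⃗ = (a_1,…,a_p) be a sequence of positive integers with a_1+⋯+a_p = k. Let H ⊆ binom([n],k) be a hypergraph that contains no (a⃗,d)-Δ-system as a subfamily, and let H* be an s-homogeneous subgraph of H with intersection pattern J. Suppose r(J) = k−1 and J contains at most k−2 sets of size k−1. Then ω_H(E) ≥ k/(k−1) for every E ∈ H*. -/

import Mathlib

open Finset

/-- A Δ-system (sunflower) with center `C`: a family of at least two sets such that
the intersection of any two distinct members equals `C`. -/
def IsDeltaSystem (D : Finset (Finset ℕ)) (C : Finset ℕ) : Prop :=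
  2 ≤ D.card ∧ ∀ A ∈ D, ∀ B ∈ D, A ≠ B → A ∩ B = C

/-- `A : Fin p → Finset ℕ` is an `a⃗`-partition of the set `E`. -/
def IsAPartition (p : ℕ) (a : Fin p → ℕ) (A : Fin p → Finset ℕ) (E : Finset ℕ) : Prop :=
  (∀ i, (A i).card = a i) ∧ (∀ i j, i ≠ j → Disjoint (A i) (A j)) ∧
    Finset.univ.sup A = E

/-- A semi-`(a⃗,b⃗)`-Δ-system with host `E0` and petals `E i j` (`i ∈ [p]`, `j ∈ [b i]`):
for some `a⃗`-partition `E0 = A 1 ∪ ⋯ ∪ A p`, for each `i` the family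
`{E0, E i 1, …, E i (b i)}` is a Δ-system with center `E0 \ A i`. -/
def IsSemiSystem (p : ℕ) (a b : Fin p → ℕ) (E0 : Finset ℕ)
    (E : (i : Fin p) → Fin (b i) → Finset ℕ) : Prop :=
  ∃ A : Fin p → Finset ℕ, IsAPartition p a A E0 ∧
    ∀ i : Fin p,
      (∀ j, E i j ≠ E0) ∧ Function.Injective (E i) ∧
      (∀ j, E0 ∩ E i j = E0 \ A i) ∧
      (∀ j j', j ≠ j' → E i j ∩ E i j' = E0 \ A i)

/-- An `(a⃗,b⃗)`-Δ-system: a semi-`(a⃗,b⃗)`-Δ-system in which the sets `E i j \ E0`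
are pairwise disjoint. -/
def IsABSystem (p : ℕ) (a b : Fin p → ℕ) (E0 : Finset ℕ)
    (E : (i : Fin p) → Fin (b i) → Finset ℕ) : Prop :=
  IsSemiSystem p a b E0 E ∧
    ∀ x y : (i : Fin p) × Fin (b i), x ≠ y →
      Disjoint (E x.1 x.2 \ E0) (E y.1 y.2 \ E0)

/-- The family described by the predicate `Fam` contains an `(a⃗,d)`-Δ-system, i.e. an
`(a⃗,b⃗)`-Δ-system with `b` a sequence of positive integers summing to `d`, all of whose
members belong to `Fam`. -/
def FamContainsADSystem (p : ℕ) (a : Fin p → ℕ) (d : ℕ) (Fam : Finset ℕ → Prop) : Prop :=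
  ∃ b : Fin p → ℕ, (∀ i, 0 < b i) ∧ (∑ i, b i) = d ∧
    ∃ E0, Fam E0 ∧ ∃ E : (i : Fin p) → Fin (b i) → Finset ℕ,
      (∀ i j, Fam (E i j)) ∧ IsABSystem p a b E0 E

/-- The finite family `H` contains an `(a⃗,d)`-Δ-system as a subfamily. -/
def ContainsADSystem (p : ℕ) (a : Fin p → ℕ) (d : ℕ) (H : Finset (Finset ℕ)) : Prop :=
  FamContainsADSystem p a d (· ∈ H)

/-- A family is `d`-wise-intersecting if every `d` of its members have a common element. -/
def WiseIntersecting (d : ℕ) (F : Finset (Finset ℕ)) : Prop :=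
  ∀ f : Fin d → Finset ℕ, (∀ i, f i ∈ F) → ∃ v, ∀ i, v ∈ f i

/-- Non-trivial `d`-wise-intersecting: `d`-wise-intersecting, but no element lies in
all members. -/
def NonTrivialWiseIntersecting (d : ℕ) (F : Finset (Finset ℕ)) : Prop :=
  WiseIntersecting d F ∧ ¬ ∃ v, ∀ A ∈ F, v ∈ A

/-- A family is intersecting if every two members have a nonempty intersection. -/
def IntersectingFam (F : Finset (Finset ℕ)) : Prop :=
  ∀ A ∈ F, ∀ B ∈ F, (A ∩ B).Nonempty

/-- Non-trivial intersecting: intersecting, but no element lies in all members. -/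
def NonTrivialIntersectingFam (F : Finset (Finset ℕ)) : Prop :=
  IntersectingFam F ∧ ¬ ∃ v, ∀ A ∈ F, v ∈ A

/-- The intersection structure `I(E,H) = {E ∩ E' : E' ∈ H \ {E}}`. -/
def interStruct (H : Finset (Finset ℕ)) (E : Finset ℕ) : Finset (Finset ℕ) :=
  (H.erase E).image (fun E' => E ∩ E')

/-- The projection `Π(S) = {i : S ∩ V i ≠ ∅}` with respect to the parts `V`. -/
def proj {k : ℕ} (V : Fin k → Finset ℕ) (S : Finset ℕ) : Finset (Fin k) :=
  Finset.univ.filter (fun i => (S ∩ V i).Nonempty)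

/-- `H ⊆ binom([n],k)` is `s`-homogeneous with intersection pattern
`J ⊆ 2^[k] ∖ {[k]}`: `H` is `k`-partite (with parts partitioning `[n] = Icc 1 n`),
`Π(I(E,H)) = J` for all `E ∈ H`, `J` is closed under intersection, and every set of
`I(E,H)` is the center of a Δ-system of size `s` formed by edges of `H` containing `E`. -/
def IsHomogeneousWith (n k s : ℕ) (H : Finset (Finset ℕ)) (J : Finset (Finset (Fin k))) :
    Prop :=
  ∃ V : Fin k → Finset ℕ,
    (∀ i j, i ≠ j → Disjoint (V i) (V j)) ∧
    Finset.univ.sup V = Finset.Icc 1 n ∧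
    (∀ E ∈ H, ∀ i, (E ∩ V i).card = 1) ∧
    (Finset.univ : Finset (Fin k)) ∉ J ∧
    (∀ E ∈ H, (interStruct H E).image (proj V) = J) ∧
    (∀ A ∈ J, ∀ B ∈ J, A ∩ B ∈ J) ∧
    (∀ E ∈ H, ∀ C ∈ interStruct H E,
      ∃ D : Finset (Finset ℕ), D ⊆ H ∧ E ∈ D ∧ D.card = s ∧ IsDeltaSystem D C)

/-- The rank `r(J) = min{|A| : A ⊆ [k], A ∉ J, no B ∈ J contains A}`. -/
noncomputable def patternRank {k : ℕ} (J : Finset (Finset (Fin k))) : ℕ :=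
  sInf {m : ℕ | ∃ A : Finset (Fin k), A ∉ J ∧ (∀ B ∈ J, ¬ A ⊆ B) ∧ A.card = m}

/-- The `i`-th shadow of a `k`-uniform family: all `(k-i)`-subsets of its edges. -/
def iShadow (k i : ℕ) (H : Finset (Finset ℕ)) : Finset (Finset ℕ) :=
  H.biUnion (fun E => Finset.powersetCard (k - i) E)

/-- `deg_H(E')`: the number of edges of `H` containing `E'`. -/
def degSet (H : Finset (Finset ℕ)) (E' : Finset ℕ) : ℕ :=
  (H.filter (fun F => E' ⊆ F)).card

/-- The weight `ω_H(E) = Σ_{E' ⊆ E, |E'| = k-1} 1 / deg_H(E')`. -/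
noncomputable def weight (k : ℕ) (H : Finset (Finset ℕ)) (E : Finset ℕ) : ℝ :=
  ∑ E' ∈ Finset.powersetCard (k - 1) E, (1 : ℝ) / (degSet H E' : ℝ)

/-- `deg_H(uv)` for a 3-graph: the number of edges containing both `u` and `v`. -/
def deg2 (H : Finset (Finset ℕ)) (u v : ℕ) : ℕ :=
  (H.filter (fun A => u ∈ A ∧ v ∈ A)).card

set_option maxHeartbeats 1000000
set_option linter.unusedSectionVars false

namespace S19
noncomputable section
open Classical Finset

/-! ### Basic lemmas -/

lemma sdiff_disjoint_of_inter_subset {G G' Y : Finset ℕ} (h : G ∩ G' ⊆ Y) :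
    Disjoint (G \ Y) (G' \ Y) := by
  rw [Finset.disjoint_left]
  intro v hv hv'
  rcases Finset.mem_sdiff.mp hv with ⟨hvG, hvY⟩
  rcases Finset.mem_sdiff.mp hv' with ⟨hvG', _⟩
  exact hvY (h (Finset.mem_inter.mpr ⟨hvG, hvG'⟩))

lemma sdiff_nonempty_of_ne {G Y : Finset ℕ} (hcard : G.card = Y.card) (hne : G ≠ Y) :
    (G \ Y).Nonempty := by
  rw [Finset.sdiff_nonempty]
  intro hsub
  exact hne (Finset.eq_of_subset_of_card_le hsub (le_of_eq hcard.symm))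

/-! ### The vertex map of a partite set -/

/-- The unique vertex of `Y` in class `V i`. -/
def vmap {k : ℕ} (V : Fin k → Finset ℕ) (Y : Finset ℕ) (i : Fin k) : ℕ :=
  if h : (Y ∩ V i).Nonempty then (Y ∩ V i).min' h else 0

lemma vmap_spec {k : ℕ} {V : Fin k → Finset ℕ} {Y : Finset ℕ}
    (hY1 : ∀ i, (Y ∩ V i).card = 1) (i : Fin k) : Y ∩ V i = {vmap V Y i} := by
  obtain ⟨v, hv⟩ := Finset.card_eq_one.mp (hY1 i)
  have huniq : ∀ u ∈ Y ∩ V i, u = v := by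
    intro u hu; rw [hv] at hu; exact Finset.mem_singleton.mp hu
  have hne : (Y ∩ V i).Nonempty := by rw [hv]; exact ⟨v, Finset.mem_singleton_self v⟩
  have : vmap V Y i = v := by
    rw [vmap, dif_pos hne]
    exact huniq _ (Finset.min'_mem (Y ∩ V i) hne)
  rw [this, hv]

lemma vmap_mem {k : ℕ} {V : Fin k → Finset ℕ} {Y : Finset ℕ}
    (hY1 : ∀ i, (Y ∩ V i).card = 1) (i : Fin k) :
    vmap V Y i ∈ Y ∧ vmap V Y i ∈ V i := by
  have h : vmap V Y i ∈ Y ∩ V i := by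
    rw [vmap_spec hY1 i]; exact Finset.mem_singleton_self _
  exact ⟨(Finset.mem_inter.mp h).1, (Finset.mem_inter.mp h).2⟩

lemma vmap_eq_of_mem {k : ℕ} {V : Fin k → Finset ℕ} {Y : Finset ℕ}
    (hY1 : ∀ i, (Y ∩ V i).card = 1) {v : ℕ} {i : Fin k} (hvY : v ∈ Y) (hvV : v ∈ V i) :
    vmap V Y i = v := by
  have h : v ∈ Y ∩ V i := Finset.mem_inter.mpr ⟨hvY, hvV⟩
  rw [vmap_spec hY1 i] at h
  exact (Finset.mem_singleton.mp h).symm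

lemma vmap_inj {k : ℕ} {V : Fin k → Finset ℕ} {Y : Finset ℕ}
    (hY1 : ∀ i, (Y ∩ V i).card = 1) (hVd : ∀ i j, i ≠ j → Disjoint (V i) (V j)) :
    Function.Injective (vmap V Y) := by
  intro i j hij
  by_contra hne
  have hi := (vmap_mem hY1 i).2
  have hj := (vmap_mem hY1 j).2
  rw [hij] at hi
  exact (Finset.disjoint_left.mp (hVd i j hne)) hi hj

lemma exists_class {k n : ℕ} {V : Fin k → Finset ℕ} {Y : Finset ℕ}
    (hVs : Finset.univ.sup V = Finset.Icc 1 n) (hYs : Y ⊆ Finset.Icc 1 n)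
    {v : ℕ} (hv : v ∈ Y) : ∃ i, v ∈ V i := by
  have : v ∈ Finset.univ.sup V := by rw [hVs]; exact hYs hv
  obtain ⟨i, _, hi⟩ := Finset.mem_sup.mp this
  exact ⟨i, hi⟩

lemma vmap_image_univ {k n : ℕ} {V : Fin k → Finset ℕ} {Y : Finset ℕ}
    (hY1 : ∀ i, (Y ∩ V i).card = 1)
    (hVs : Finset.univ.sup V = Finset.Icc 1 n) (hYs : Y ⊆ Finset.Icc 1 n) :
    Finset.univ.image (vmap V Y) = Y := by
  apply Finset.Subset.antisymm
  · intro v hv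
    obtain ⟨i, _, hi⟩ := Finset.mem_image.mp hv
    rw [← hi]; exact (vmap_mem hY1 i).1
  · intro v hv
    obtain ⟨i, hiv⟩ := exists_class hVs hYs hv
    exact Finset.mem_image.mpr ⟨i, Finset.mem_univ _, vmap_eq_of_mem hY1 hv hiv⟩

lemma proj_image {k : ℕ} {V : Fin k → Finset ℕ} {Y : Finset ℕ}
    (hY1 : ∀ i, (Y ∩ V i).card = 1) (hVd : ∀ i j, i ≠ j → Disjoint (V i) (V j))
    (B : Finset (Fin k)) : proj V (B.image (vmap V Y)) = B := by
  ext i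
  simp only [proj, Finset.mem_filter, Finset.mem_univ, true_and]
  constructor
  · rintro ⟨v, hv⟩
    rcases Finset.mem_inter.mp hv with ⟨hvB, hvV⟩
    obtain ⟨i', hi'B, hi'⟩ := Finset.mem_image.mp hvB
    by_cases h : i' = i
    · rwa [← h]
    · have hv' : v ∈ V i' := by
        have := (vmap_mem hY1 i').2; rwa [hi'] at this
      exact absurd hvV (Finset.disjoint_left.mp (hVd i' i h) hv')
  · intro hiB
    exact ⟨vmap V Y i, Finset.mem_inter.mpr ⟨Finset.mem_image_of_mem _ hiB, (vmap_mem hY1 i).2⟩⟩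

lemma eq_image_proj {k n : ℕ} {V : Fin k → Finset ℕ} {Y : Finset ℕ}
    (hY1 : ∀ i, (Y ∩ V i).card = 1)
    (hVs : Finset.univ.sup V = Finset.Icc 1 n) (hYs : Y ⊆ Finset.Icc 1 n)
    {C : Finset ℕ} (hC : C ⊆ Y) :
    C = (proj V C).image (vmap V Y) := by
  ext v
  constructor
  · intro hv
    obtain ⟨i, hiv⟩ := exists_class hVs hYs (hC hv)
    have hip : i ∈ proj V C := by
      simp only [proj, Finset.mem_filter, Finset.mem_univ, true_and]
      exact ⟨v, Finset.mem_inter.mpr ⟨hv, hiv⟩⟩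
    exact Finset.mem_image.mpr ⟨i, hip, vmap_eq_of_mem hY1 (hC hv) hiv⟩
  · intro hv
    obtain ⟨i, hip, hi⟩ := Finset.mem_image.mp hv
    simp only [proj, Finset.mem_filter, Finset.mem_univ, true_and] at hip
    obtain ⟨u, hu⟩ := hip
    rcases Finset.mem_inter.mp hu with ⟨huC, huV⟩
    have : vmap V Y i = u := vmap_eq_of_mem hY1 (hC huC) huV
    rw [← hi, this]; exact huC

lemma image_compl {k n : ℕ} {V : Fin k → Finset ℕ} {Y : Finset ℕ}
    (hY1 : ∀ i, (Y ∩ V i).card = 1) (hVd : ∀ i j, i ≠ j → Disjoint (V i) (V j))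
    (hVs : Finset.univ.sup V = Finset.Icc 1 n) (hYs : Y ⊆ Finset.Icc 1 n)
    (B : Finset (Fin k)) :
    Y \ (B.image (vmap V Y)) = (Finset.univ \ B).image (vmap V Y) := by
  rw [Finset.image_sdiff _ _ (vmap_inj hY1 hVd), vmap_image_univ hY1 hVs hYs]

end
end S19
namespace S19
noncomputable section
open Classical Finset

/-! ### Distribution of I-elements into big parts -/

lemma distr {p : ℕ} (a : Fin p → ℕ) :
    ∀ (u : Finset (Fin p)), (∀ j ∈ u, 2 ≤ a j) → ∀ c : ℕ, 2 ≤ c → c ≤ ∑ j ∈ u, a j →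
      (Even c ∨ ∃ j ∈ u, 3 ≤ a j) →
      ∃ f : Fin p → ℕ, (∀ j, j ∉ u → f j = 0) ∧
        (∀ j ∈ u, f j = 0 ∨ (2 ≤ f j ∧ f j ≤ a j)) ∧ (∑ j ∈ u, f j = c) := by
  intro u
  induction u using Finset.induction_on with
  | empty =>
    intro _ c hc hle _
    simp only [Finset.sum_empty] at hle
    omega
  | @insert j u hj ih =>
    intro h2 c hc2 hcle hpar
    rw [Finset.sum_insert hj] at hcle
    have hA2 : 2 ≤ a j := h2 j (Finset.mem_insert_self _ _)
    have h2u : ∀ j' ∈ u, 2 ≤ a j' := fun j' hj' => h2 j' (Finset.mem_insert_of_mem hj')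
    -- helper to conclude from a value x at j and a recursive solution for c - x on u
    have step : ∀ x : ℕ, (x = 0 ∨ (2 ≤ x ∧ x ≤ a j)) → x ≤ c →
        (∀ f : Fin p → ℕ, (∀ j', j' ∉ u → f j' = 0) →
          (∀ j' ∈ u, f j' = 0 ∨ (2 ≤ f j' ∧ f j' ≤ a j')) → (∑ j' ∈ u, f j' = c - x) →
          ∃ f : Fin p → ℕ, (∀ j', j' ∉ insert j u → f j' = 0) ∧
            (∀ j' ∈ insert j u, f j' = 0 ∨ (2 ≤ f j' ∧ f j' ≤ a j')) ∧
            (∑ j' ∈ insert j u, f j' = c)) := by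
      intro x hxcond hxle f hf0 hfc hfs
      refine ⟨Function.update f j x, ?_, ?_, ?_⟩
      · intro j' hj'
        have h1 : j' ≠ j := fun h => hj' (h ▸ Finset.mem_insert_self _ _)
        have h2' : j' ∉ u := fun h => hj' (Finset.mem_insert_of_mem h)
        rw [Function.update_of_ne h1]
        exact hf0 j' h2'
      · intro j' hj'
        rcases Finset.mem_insert.mp hj' with h | h
        · subst h; rw [Function.update_self]; exact hxcond
        · have h1 : j' ≠ j := ne_of_mem_of_not_mem h hj
          rw [Function.update_of_ne h1]
          exact hfc j' h
      · rw [Finset.sum_insert hj, Function.update_self]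
        have : ∑ j' ∈ u, Function.update f j x j' = ∑ j' ∈ u, f j' := by
          apply Finset.sum_congr rfl
          intro j' hj'
          exact Function.update_of_ne (ne_of_mem_of_not_mem hj' hj) _ _
        rw [this, hfs]
        omega
    by_cases hfull : c = a j + ∑ j' ∈ u, a j'
    · -- take everything in full
      refine ⟨fun j' => if j' ∈ insert j u then a j' else 0, ?_, ?_, ?_⟩
      · intro j' hj'; simp only [if_neg hj']
      · intro j' hj'; simp only [if_pos hj']; exact Or.inr ⟨h2 j' hj', le_refl _⟩
      · have heq : ∑ j' ∈ insert j u, (if j' ∈ insert j u then a j' else 0)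
            = ∑ j' ∈ insert j u, a j' := Finset.sum_congr rfl (fun j' hj' => if_pos hj')
        rw [heq, Finset.sum_insert hj]
        omega
    · have hclt : c < a j + ∑ j' ∈ u, a j' := lt_of_le_of_ne hcle hfull
      by_cases hcA : c ≤ a j
      · -- single part
        refine step c (Or.inr ⟨hc2, hcA⟩) (le_refl _) (fun _ => 0) (fun _ _ => rfl)
          (fun j' _ => Or.inl rfl) (by simp)
      · have hAc : a j < c := not_le.mp hcA
        have hune : (0:ℕ) < ∑ j' ∈ u, a j' := by omega
        by_cases hu3 : ∃ j' ∈ u, 3 ≤ a j'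
        · -- tail contains a part of size ≥ 3 : no parity constraints
          by_cases hca2 : 2 ≤ c - a j
          · obtain ⟨f, hf0, hfc, hfs⟩ := ih h2u (c - a j) hca2 (by omega) (Or.inr hu3)
            exact step (a j) (Or.inr ⟨hA2, le_refl _⟩) (by omega) f hf0 hfc hfs
          · -- c = a j + 1
            have hc1 : c = a j + 1 := by omega
            by_cases hA3 : 3 ≤ a j
            · -- use x = a j - 1, recurse with c' = 2
              obtain ⟨j3, hj3u, hj3⟩ := hu3
              have hsum3 : 2 ≤ ∑ j' ∈ u, a j' :=
                le_trans (by omega) (Finset.single_le_sum (f := a) (fun j' _ => Nat.zero_le _) hj3u)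
              obtain ⟨f, hf0, hfc, hfs⟩ := ih h2u 2 (le_refl _) hsum3 (Or.inl (by decide))
              refine step (a j - 1) (Or.inr ⟨by omega, by omega⟩) (by omega) f hf0 hfc ?_
              rw [hfs]; omega
            · -- a j = 2, c = 3, recurse on u with c = 3
              have hA : a j = 2 := by omega
              obtain ⟨j3, hj3u, hj3⟩ := hu3
              have hsum3 : 3 ≤ ∑ j' ∈ u, a j' :=
                le_trans hj3 (Finset.single_le_sum (f := a) (fun j' _ => Nat.zero_le _) hj3u)
              obtain ⟨f, hf0, hfc, hfs⟩ := ih h2u 3 (by omega) hsum3 (Or.inr ⟨j3, hj3u, hj3⟩)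
              refine step 0 (Or.inl rfl) (by omega) f hf0 hfc ?_
              rw [hfs]; omega
        · -- all of u has size exactly 2
          have hall2 : ∀ j' ∈ u, a j' = 2 := by
            intro j' hj'
            have := h2u j' hj'
            have : ¬ 3 ≤ a j' := fun h => hu3 ⟨j', hj', h⟩
            omega
          have hTeven : Even (∑ j' ∈ u, a j') := by
            rw [Finset.sum_congr rfl hall2, Finset.sum_const, smul_eq_mul]
            exact ⟨u.card, by ring⟩
          by_cases hpar2 : Even (c - a j)
          · have hca2 : 2 ≤ c - a j := by
              rcases hpar2 with ⟨m, hm⟩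
              omega
            obtain ⟨f, hf0, hfc, hfs⟩ := ih h2u (c - a j) hca2 (by omega) (Or.inl hpar2)
            exact step (a j) (Or.inr ⟨hA2, le_refl _⟩) (by omega) f hf0 hfc hfs
          · -- c - a j is odd
            by_cases hA3 : 3 ≤ a j
            · have hev : Even (c - (a j - 1)) := by
                rcases Nat.even_or_odd (c - a j) with h | h
                · exact absurd h hpar2
                · rcases h with ⟨m, hm⟩
                  exact ⟨m + 1, by omega⟩
              have hge : 2 ≤ c - (a j - 1) := by
                rcases hev with ⟨m, hm⟩; omega
              obtain ⟨f, hf0, hfc, hfs⟩ := ih h2u (c - (a j - 1)) hge (by omega) (Or.inl hev)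
              exact step (a j - 1) (Or.inr ⟨by omega, by omega⟩) (by omega) f hf0 hfc hfs
            · -- a j = 2 and c odd : contradiction with hpar
              have hA : a j = 2 := by omega
              have hcodd : ¬ Even c := by
                intro ⟨m, hm⟩
                apply hpar2
                exact ⟨m - 1, by omega⟩
              rcases hpar with h | ⟨j3, hj3, h3⟩
              · exact absurd h hcodd
              · rcases Finset.mem_insert.mp hj3 with h | h
                · subst h; omega
                · exact absurd ⟨j3, h, h3⟩ hu3

/-! ### Existence of partitions with prescribed cardinalities -/

lemma partition_exists {p k : ℕ} :
    ∀ (u : Finset (Fin p)) (X : Finset (Fin k)) (f : Fin p → ℕ),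
      (∑ j ∈ u, f j = X.card) →
      ∃ P : Fin p → Finset (Fin k), (∀ j, j ∉ u → P j = ∅) ∧ (∀ j ∈ u, (P j).card = f j) ∧
        (∀ j, P j ⊆ X) ∧ (∀ j j', j ≠ j' → Disjoint (P j) (P j')) ∧ (u.biUnion P = X) := by
  intro u
  induction u using Finset.induction_on with
  | empty =>
    intro X f h
    simp only [Finset.sum_empty] at h
    have : X = ∅ := Finset.card_eq_zero.mp h.symm
    exact ⟨fun _ => ∅, fun _ _ => rfl, fun j hj => absurd hj (Finset.notMem_empty j),
      fun _ => by simp, fun _ _ _ => by simp, by simp [this]⟩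
  | @insert j u hj ih =>
    intro X f h
    rw [Finset.sum_insert hj] at h
    have hfj : f j ≤ X.card := by omega
    obtain ⟨Y, hYX, hYcard⟩ := Finset.exists_subset_card_eq hfj
    have hcard' : ∑ j' ∈ u, f j' = (X \ Y).card := by
      rw [Finset.card_sdiff_of_subset hYX, hYcard]; omega
    obtain ⟨P, hP0, hPcard, hPsub, hPdisj, hPcover⟩ := ih (X \ Y) f hcard'
    refine ⟨Function.update P j Y, ?_, ?_, ?_, ?_, ?_⟩
    · intro j' hj'
      have h1 : j' ≠ j := fun h => hj' (h ▸ Finset.mem_insert_self _ _)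
      rw [Function.update_of_ne h1]
      exact hP0 j' (fun h => hj' (Finset.mem_insert_of_mem h))
    · intro j' hj'
      rcases Finset.mem_insert.mp hj' with h | h
      · subst h; rw [Function.update_self]; exact hYcard
      · rw [Function.update_of_ne (ne_of_mem_of_not_mem h hj)]; exact hPcard j' h
    · intro j'
      by_cases h : j' = j
      · subst h; rw [Function.update_self]; exact hYX
      · rw [Function.update_of_ne h]
        exact (hPsub j').trans (Finset.sdiff_subset)
    · intro j1 j2 hne
      by_cases h1 : j1 = j
      · subst h1
        rw [Function.update_self, Function.update_of_ne (Ne.symm hne)]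
        have := hPsub j2
        exact Finset.disjoint_left.mpr (fun x hx hx2 =>
          (Finset.mem_sdiff.mp (this hx2)).2 hx)
      · by_cases h2 : j2 = j
        · subst h2
          rw [Function.update_self, Function.update_of_ne h1]
          have := hPsub j1
          exact Finset.disjoint_left.mpr (fun x hx hx2 =>
            (Finset.mem_sdiff.mp (this hx)).2 hx2)
        · rw [Function.update_of_ne h1, Function.update_of_ne h2]
          exact hPdisj j1 j2 hne
    · rw [Finset.biUnion_insert, Function.update_self]
      have : ∀ j' ∈ u, Function.update P j Y j' = P j' := by
        intro j' hj'
        exact Function.update_of_ne (ne_of_mem_of_not_mem hj' hj) _ _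
      rw [Finset.biUnion_congr rfl this, hPcover, Finset.union_sdiff_of_subset hYX]

end
end S19
namespace S19
noncomputable section
open Classical Finset

/-! ### Greedy selection of petals with disjoint differences -/

lemma select {p k d s : ℕ} (E0 : Finset ℕ) (A : Fin p → Finset ℕ)
    (src : Fin p → Finset (Finset ℕ))
    (hsrcP : ∀ j, ∀ G ∈ src j, ∀ G' ∈ src j, G ≠ G' → G ∩ G' = E0 \ A j)
    (hGdiff : ∀ j, ∀ G ∈ src j, (G \ E0).card ≤ k)
    (b : Fin p → ℕ) (hs : k * d + 1 ≤ s) (hk : 1 ≤ k) :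
    ∀ (u : Finset (Fin p)) (V : Finset ℕ),
      (∀ j ∈ u, s - 1 ≤ (src j).card) →
      V.card + k * (∑ j ∈ u, b j) ≤ k * d →
      ∃ sel : Fin p → Finset (Finset ℕ),
        (∀ j ∈ u, sel j ⊆ src j ∧ (sel j).card = b j ∧
          ∀ G ∈ sel j, Disjoint (G \ E0) V) ∧
        (∀ j ∈ u, ∀ j' ∈ u, j ≠ j' → ∀ G ∈ sel j, ∀ G' ∈ sel j',
          Disjoint (G \ E0) (G' \ E0)) := by
  intro u
  induction u using Finset.induction_on with
  | empty =>
    intro V _ _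
    exact ⟨fun _ => ∅, fun j hj => absurd hj (Finset.notMem_empty j),
      fun j hj => absurd hj (Finset.notMem_empty j)⟩
  | @insert j u hj ih =>
    intro V hbig hinv
    rw [Finset.sum_insert hj] at hinv
    -- the petals of `src j` whose difference meets `V`
    set bad := (src j).filter (fun G => ¬ Disjoint (G \ E0) V) with hbad
    have hbadcard : bad.card ≤ V.card := by
      have : ∀ G ∈ bad, ∃ v, v ∈ (G \ E0) ∩ V := by
        intro G hG
        have := (Finset.mem_filter.mp hG).2
        rw [Finset.not_disjoint_iff] at this
        obtain ⟨v, hv1, hv2⟩ := this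
        exact ⟨v, Finset.mem_inter.mpr ⟨hv1, hv2⟩⟩
      choose g hg using this
      apply Finset.card_le_card_of_injOn (fun G => if h : G ∈ bad then g G h else 0)
      · intro G hG
        simp only [Finset.mem_coe] at hG ⊢
        simp only [dif_pos hG]
        exact (Finset.mem_inter.mp (hg G hG)).2
      · intro G hG G' hG' heq
        simp only [Finset.mem_coe] at hG hG'
        simp only [dif_pos hG, dif_pos hG'] at heq
        by_contra hne
        have h1 := Finset.mem_inter.mp (hg G hG)
        have h2 := Finset.mem_inter.mp (hg G' hG')
        have hGG' : G ∩ G' = E0 \ A j :=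
          hsrcP j G (Finset.mem_filter.mp hG).1 G' (Finset.mem_filter.mp hG').1 hne
        have hdisj : Disjoint (G \ E0) (G' \ E0) :=
          sdiff_disjoint_of_inter_subset (by rw [hGG']; exact Finset.sdiff_subset)
        exact (Finset.disjoint_left.mp hdisj) h1.1 (heq ▸ h2.1)
    have hexp : k * (b j + ∑ j' ∈ u, b j') = k * b j + k * ∑ j' ∈ u, b j' := by ring
    have hgood : b j ≤ ((src j) \ bad).card := by
      have h1 : s - 1 ≤ (src j).card := hbig j (Finset.mem_insert_self _ _)
      have h2 : ((src j) \ bad).card = (src j).card - bad.card :=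
        Finset.card_sdiff_of_subset (Finset.filter_subset _ _)
      have h3 : b j ≤ k * b j := Nat.le_mul_of_pos_left _ (by omega)
      omega
    obtain ⟨selj, hseljsub, hseljcard⟩ := Finset.exists_subset_card_eq hgood
    have hseljsrc : selj ⊆ src j := hseljsub.trans Finset.sdiff_subset
    have hseljV : ∀ G ∈ selj, Disjoint (G \ E0) V := by
      intro G hG
      have := hseljsub hG
      rcases Finset.mem_sdiff.mp this with ⟨h1, h2⟩
      by_contra hc
      exact h2 (Finset.mem_filter.mpr ⟨h1, hc⟩)
    -- new forbidden set
    set V' := V ∪ selj.biUnion (fun G => G \ E0) with hV'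
    have hV'card : V'.card ≤ V.card + k * b j := by
      calc V'.card ≤ V.card + (selj.biUnion (fun G => G \ E0)).card :=
            Finset.card_union_le _ _
        _ ≤ V.card + ∑ G ∈ selj, (G \ E0).card := by
            exact Nat.add_le_add_left (Finset.card_biUnion_le) _
        _ ≤ V.card + ∑ G ∈ selj, k := by
            apply Nat.add_le_add_left
            apply Finset.sum_le_sum
            intro G hG
            exact hGdiff j G (hseljsrc hG)
        _ = V.card + selj.card * k := by rw [Finset.sum_const, smul_eq_mul]
        _ = V.card + k * b j := by rw [hseljcard, Nat.mul_comm]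
    obtain ⟨sel, hsel1, hsel2⟩ := ih V' (fun j' hj' => hbig j' (Finset.mem_insert_of_mem hj'))
      (by omega)
    refine ⟨Function.update sel j selj, ?_, ?_⟩
    · intro j' hj'
      rcases Finset.mem_insert.mp hj' with h | h
      · subst h
        rw [Function.update_self]
        exact ⟨hseljsrc, hseljcard, hseljV⟩
      · rw [Function.update_of_ne (ne_of_mem_of_not_mem h hj)]
        obtain ⟨hsub, hcard, hdisj⟩ := hsel1 j' h
        exact ⟨hsub, hcard, fun G hG =>
          Finset.disjoint_of_subset_right Finset.subset_union_left (hdisj G hG)⟩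
    · intro j1 hj1 j2 hj2 hne G hG G' hG'
      rcases Finset.mem_insert.mp hj1 with h1 | h1 <;>
        rcases Finset.mem_insert.mp hj2 with h2 | h2
      · exact absurd (h1.trans h2.symm) hne
      · subst h1
        rw [Function.update_self] at hG
        rw [Function.update_of_ne (ne_of_mem_of_not_mem h2 hj)] at hG'
        have := (hsel1 j2 h2).2.2 G' hG'
        have hGsub : G \ E0 ⊆ V' := by
          intro v hv
          exact Finset.mem_union_right _ (Finset.mem_biUnion.mpr ⟨G, hG, hv⟩)
        exact Finset.disjoint_of_subset_left hGsub this.symm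
      · subst h2
        rw [Function.update_self] at hG'
        rw [Function.update_of_ne (ne_of_mem_of_not_mem h1 hj)] at hG
        have := (hsel1 j1 h1).2.2 G hG
        have hGsub : G' \ E0 ⊆ V' := by
          intro v hv
          exact Finset.mem_union_right _ (Finset.mem_biUnion.mpr ⟨G', hG', hv⟩)
        exact Finset.disjoint_of_subset_right hGsub this
      · rw [Function.update_of_ne (ne_of_mem_of_not_mem h1 hj)] at hG
        rw [Function.update_of_ne (ne_of_mem_of_not_mem h2 hj)] at hG'
        exact hsel2 j1 h1 j2 h2 hne G hG G' hG'

/-! ### Assembling an (a,d)-Δ-system -/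

lemma buildSystem {n p k d s : ℕ} (hpd : p ≤ d) (hk : 1 ≤ k)
    (hs : k * d + 1 ≤ s)
    (a : Fin p → ℕ) (H : Finset (Finset ℕ))
    (hH : H ⊆ Finset.powersetCard k (Finset.Icc 1 n))
    (Y : Finset ℕ) (hY : Y ∈ H)
    (A : Fin p → Finset ℕ) (hApart : IsAPartition p a A Y)
    (src : Fin p → Finset (Finset ℕ))
    (hsrcH : ∀ j, src j ⊆ H)
    (hsrcne : ∀ j, Y ∉ src j)
    (hsrcC : ∀ j, ∀ G ∈ src j, Y ∩ G = Y \ A j)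
    (hsrcP : ∀ j, ∀ G ∈ src j, ∀ G' ∈ src j, G ≠ G' → G ∩ G' = Y \ A j)
    (slots : Finset (Fin p))
    (hslot1 : ∀ j ∈ slots, (src j).card = 1)
    (hslotdisj : ∀ j ∈ slots, ∀ j' ∈ slots, j ≠ j' → ∀ G ∈ src j, ∀ G' ∈ src j',
        Disjoint (G \ Y) (G' \ Y))
    (hbigcard : ∀ j, j ∉ slots → s - 1 ≤ (src j).card)
    (j1 : Fin p) (hj1 : j1 ∉ slots) :
    ContainsADSystem p a d H := by
  have hdiffk : ∀ j, ∀ G ∈ src j, (G \ Y).card ≤ k := by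
    intro j G hG
    calc (G \ Y).card ≤ G.card := Finset.card_le_card (Finset.sdiff_subset)
      _ = k := (Finset.mem_powersetCard.mp (hH (hsrcH j hG))).2
  -- the multiplicities
  set b : Fin p → ℕ := Function.update (fun _ => 1) j1 (d + 1 - p) with hbdef
  have hbpos : ∀ j, 0 < b j := by
    intro j
    by_cases h : j = j1
    · subst h; rw [hbdef, Function.update_self]; omega
    · rw [hbdef, Function.update_of_ne h]; omega
  have hbone : ∀ j, j ≠ j1 → b j = 1 := by
    intro j h; rw [hbdef, Function.update_of_ne h]
  have hbsum : ∑ j, b j = d := by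
    rw [hbdef, Finset.sum_update_of_mem (Finset.mem_univ j1)]
    rw [Finset.sum_const, smul_eq_mul, mul_one]
    have : (Finset.univ \ {j1} : Finset (Fin p)).card = p - 1 := by
      rw [Finset.card_sdiff_of_subset (Finset.singleton_subset_iff.mpr (Finset.mem_univ j1))]
      simp
    rw [this]
    have hp1 : 1 ≤ p := j1.pos
    omega
  -- forbidden set coming from the slots
  set V0 := slots.biUnion (fun j => (src j).biUnion (fun G => G \ Y)) with hV0
  have hV0card : V0.card ≤ slots.card * k := by
    calc V0.card ≤ ∑ j ∈ slots, ((src j).biUnion (fun G => G \ Y)).card :=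
          Finset.card_biUnion_le
      _ ≤ ∑ j ∈ slots, k := by
          apply Finset.sum_le_sum
          intro j hjs
          calc ((src j).biUnion (fun G => G \ Y)).card
              ≤ ∑ G ∈ src j, (G \ Y).card := Finset.card_biUnion_le
            _ ≤ ∑ G ∈ src j, k := Finset.sum_le_sum (fun G hG => hdiffk j G hG)
            _ = (src j).card * k := by rw [Finset.sum_const, smul_eq_mul]
            _ = k := by rw [hslot1 j hjs, one_mul]
      _ = slots.card * k := by rw [Finset.sum_const, smul_eq_mul]
  have hsum_split : ∑ j ∈ slots, b j + ∑ j ∈ Finset.univ \ slots, b j = d := by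
    have h := Finset.sum_sdiff (f := b) (Finset.subset_univ slots)
    omega
  have hslotsum : ∑ j ∈ slots, b j = slots.card := by
    rw [Finset.sum_congr rfl (fun j hjs => hbone j (fun h => hj1 (h ▸ hjs)))]
    rw [Finset.sum_const, smul_eq_mul, mul_one]
  have hinv : V0.card + k * (∑ j ∈ Finset.univ \ slots, b j) ≤ k * d := by
    have h1 : ∑ j ∈ Finset.univ \ slots, b j = d - slots.card := by omega
    have h2 : slots.card ≤ d := by omega
    calc V0.card + k * (∑ j ∈ Finset.univ \ slots, b j)
        ≤ slots.card * k + k * (d - slots.card) := by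
          apply Nat.add_le_add hV0card
          rw [h1]
      _ = k * d := by
          rw [Nat.mul_comm (slots.card) k, ← Nat.mul_add]
          congr 1
          omega
  obtain ⟨sel, hsel1, hsel2⟩ := select Y A src hsrcP hdiffk b hs hk
    (Finset.univ \ slots) V0
    (fun j hjm => hbigcard j (Finset.mem_sdiff.mp hjm).2) hinv
  -- combined selection
  set selAll : Fin p → Finset (Finset ℕ) :=
    fun j => if j ∈ slots then src j else sel j with hselAll
  have hmem_ns : ∀ j, j ∉ slots → j ∈ Finset.univ \ slots :=
    fun j h => Finset.mem_sdiff.mpr ⟨Finset.mem_univ j, h⟩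
  have hselAllsub : ∀ j, selAll j ⊆ src j := by
    intro j
    by_cases h : j ∈ slots
    · rw [hselAll]; simp only [if_pos h]
      exact Finset.Subset.refl _
    · rw [hselAll]; simp only [if_neg h]
      exact (hsel1 j (hmem_ns j h)).1
  have hselAllcard : ∀ j, (selAll j).card = b j := by
    intro j
    by_cases h : j ∈ slots
    · rw [hselAll]; simp only [if_pos h]
      rw [hslot1 j h, hbone j (fun he => hj1 (he ▸ h))]
    · rw [hselAll]; simp only [if_neg h]
      exact (hsel1 j (hmem_ns j h)).2.1
  -- cross-part disjointness of differences
  have hcross : ∀ j j', j ≠ j' → ∀ G ∈ selAll j, ∀ G' ∈ selAll j',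
      Disjoint (G \ Y) (G' \ Y) := by
    intro j j' hne G hG G' hG'
    by_cases h : j ∈ slots <;> by_cases h' : j' ∈ slots
    · rw [hselAll] at hG hG'; simp only [if_pos h] at hG; simp only [if_pos h'] at hG'
      exact hslotdisj j h j' h' hne G hG G' hG'
    · rw [hselAll] at hG hG'; simp only [if_pos h] at hG; simp only [if_neg h'] at hG'
      have hd := (hsel1 j' (hmem_ns j' h')).2.2 G' hG'
      have hsub : G \ Y ⊆ V0 := by
        intro v hv
        exact Finset.mem_biUnion.mpr ⟨j, h, Finset.mem_biUnion.mpr ⟨G, hG, hv⟩⟩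
      exact Finset.disjoint_of_subset_left hsub hd.symm
    · rw [hselAll] at hG hG'; simp only [if_neg h] at hG; simp only [if_pos h'] at hG'
      have hd := (hsel1 j (hmem_ns j h)).2.2 G hG
      have hsub : G' \ Y ⊆ V0 := by
        intro v hv
        exact Finset.mem_biUnion.mpr ⟨j', h', Finset.mem_biUnion.mpr ⟨G', hG', hv⟩⟩
      exact Finset.disjoint_of_subset_right hsub hd
    · rw [hselAll] at hG hG'; simp only [if_neg h] at hG; simp only [if_neg h'] at hG'
      exact hsel2 j (hmem_ns j h) j' (hmem_ns j' h') hne G hG G' hG'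
  -- enumerate the selections
  have hcards : ∀ i, (selAll i).card = b i := hselAllcard
  refine ⟨b, hbpos, hbsum, Y, hY, fun i jj => ((Finset.equivFinOfCardEq (hcards i)).symm jj).val,
    ?_, ?_, ?_⟩
  · intro i jj
    have := ((Finset.equivFinOfCardEq (hcards i)).symm jj).property
    exact hsrcH i (hselAllsub i this)
  · refine ⟨A, hApart, ?_⟩
    intro i
    have hmem : ∀ jj, ((Finset.equivFinOfCardEq (hcards i)).symm jj).val ∈ src i :=
      fun jj => hselAllsub i ((Finset.equivFinOfCardEq (hcards i)).symm jj).property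
    refine ⟨?_, ?_, ?_, ?_⟩
    · intro jj heq
      exact hsrcne i (heq ▸ hmem jj)
    · intro jj jj' heq
      exact (Equiv.injective _) (Subtype.coe_injective heq)
    · intro jj
      exact hsrcC i _ (hmem jj)
    · intro jj jj' hne
      apply hsrcP i _ (hmem jj) _ (hmem jj')
      intro heq
      exact hne ((Equiv.injective _) (Subtype.coe_injective heq))
  · rintro ⟨i, jj⟩ ⟨i', jj'⟩ hne
    simp only
    by_cases h : i = i'
    · subst h
      have hjj : jj ≠ jj' := by
        intro heq
        exact hne (by rw [heq])
      have hGne : ((Finset.equivFinOfCardEq (hcards i)).symm jj).val ≠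
          ((Finset.equivFinOfCardEq (hcards i)).symm jj').val := by
        intro heq
        exact hjj ((Equiv.injective _) (Subtype.coe_injective heq))
      have := hsrcP i _ (hselAllsub i ((Finset.equivFinOfCardEq (hcards i)).symm jj).property)
        _ (hselAllsub i ((Finset.equivFinOfCardEq (hcards i)).symm jj').property) hGne
      exact sdiff_disjoint_of_inter_subset (by rw [this]; exact Finset.sdiff_subset)
    · exact hcross i i' h _ ((Finset.equivFinOfCardEq (hcards i)).symm jj).property
        _ ((Finset.equivFinOfCardEq (hcards i')).symm jj').property

end
end S19
namespace S19
noncomputable section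
open Classical Finset

/-! ### interStruct and sunflower machinery -/

lemma interStruct_subset {Hstar : Finset (Finset ℕ)} {Y C : Finset ℕ}
    (hC : C ∈ interStruct Hstar Y) : C ⊆ Y := by
  obtain ⟨E', _, hE'⟩ := Finset.mem_image.mp hC
  rw [← hE']
  exact Finset.inter_subset_left

lemma realize {n k : ℕ} {Hstar : Finset (Finset ℕ)} {J : Finset (Finset (Fin k))}
    {V : Fin k → Finset ℕ}
    (hVd : ∀ i j, i ≠ j → Disjoint (V i) (V j))
    (hVs : Finset.univ.sup V = Finset.Icc 1 n)
    (hProj : ∀ E ∈ Hstar, (interStruct Hstar E).image (proj V) = J)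
    {Y : Finset ℕ} (hY : Y ∈ Hstar) (hYs : Y ⊆ Finset.Icc 1 n)
    (hY1 : ∀ i, (Y ∩ V i).card = 1)
    {B : Finset (Fin k)} (hB : B ∈ J) :
    B.image (vmap V Y) ∈ interStruct Hstar Y := by
  have hB' : B ∈ (interStruct Hstar Y).image (proj V) := by rw [hProj Y hY]; exact hB
  obtain ⟨C, hC, hCp⟩ := Finset.mem_image.mp hB'
  have hCsub : C ⊆ Y := interStruct_subset hC
  have hCeq : C = (proj V C).image (vmap V Y) := eq_image_proj hY1 hVs hYs hCsub
  rw [hCp] at hCeq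
  rw [← hCeq]
  exact hC

lemma petals_of_J {n k s : ℕ} {Hstar : Finset (Finset ℕ)} {J : Finset (Finset (Fin k))}
    {V : Fin k → Finset ℕ}
    (hVd : ∀ i j, i ≠ j → Disjoint (V i) (V j))
    (hVs : Finset.univ.sup V = Finset.Icc 1 n)
    (hProj : ∀ E ∈ Hstar, (interStruct Hstar E).image (proj V) = J)
    (hSun : ∀ E ∈ Hstar, ∀ C ∈ interStruct Hstar E,
      ∃ D : Finset (Finset ℕ), D ⊆ Hstar ∧ E ∈ D ∧ D.card = s ∧ IsDeltaSystem D C)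
    {Y : Finset ℕ} (hY : Y ∈ Hstar) (hYs : Y ⊆ Finset.Icc 1 n)
    (hY1 : ∀ i, (Y ∩ V i).card = 1)
    {B : Finset (Fin k)} (hB : B ∈ J) :
    ∃ petals : Finset (Finset ℕ), petals.card = s - 1 ∧ Y ∉ petals ∧ petals ⊆ Hstar ∧
      (∀ G ∈ petals, Y ∩ G = B.image (vmap V Y)) ∧
      (∀ G ∈ petals, ∀ G' ∈ petals, G ≠ G' → G ∩ G' = B.image (vmap V Y)) := by
  have hmem := realize hVd hVs hProj hY hYs hY1 hB
  obtain ⟨D, hDsub, hYD, hDcard, hΔ⟩ := hSun Y hY _ hmem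
  refine ⟨D.erase Y, ?_, Finset.notMem_erase _ _, ?_, ?_, ?_⟩
  · rw [Finset.card_erase_of_mem hYD, hDcard]
  · exact (Finset.erase_subset _ _).trans hDsub
  · intro G hG
    have hGD := Finset.mem_of_mem_erase hG
    have hGne : G ≠ Y := Finset.ne_of_mem_erase hG
    exact hΔ.2 Y hYD G hGD (Ne.symm hGne)
  · intro G hG G' hG' hne
    exact hΔ.2 G (Finset.mem_of_mem_erase hG) G' (Finset.mem_of_mem_erase hG') hne

/-! ### Rank and closure properties of the pattern J -/

lemma rank_dominates {k : ℕ} {J : Finset (Finset (Fin k))} (hrank : patternRank J = k - 1)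
    {A : Finset (Fin k)} (hA : A.card < k - 1) : A ∈ J ∨ ∃ B ∈ J, A ⊆ B := by
  by_contra h
  push_neg at h
  have hm : A.card ∈ {m : ℕ | ∃ A : Finset (Fin k), A ∉ J ∧ (∀ B ∈ J, ¬ A ⊆ B) ∧ A.card = m} :=
    ⟨A, h.1, h.2, rfl⟩
  have := Nat.sInf_le hm
  rw [patternRank] at hrank
  omega

lemma copair_mem {k : ℕ} {J : Finset (Finset (Fin k))} (hk : 3 ≤ k)
    (hrank : patternRank J = k - 1) (hUniv : (Finset.univ : Finset (Fin k)) ∉ J)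
    {x y : Fin k} (hx : Finset.univ.erase x ∉ J) (hy : Finset.univ.erase y ∉ J)
    (hxy : x ≠ y) : Finset.univ \ {x, y} ∈ J := by
  have hcard : (Finset.univ \ ({x, y} : Finset (Fin k))).card = k - 2 := by
    rw [Finset.card_sdiff_of_subset (Finset.subset_univ _), Finset.card_univ, Fintype.card_fin,
      Finset.card_insert_of_notMem (by simpa using hxy), Finset.card_singleton]
  rcases rank_dominates hrank (by rw [hcard]; omega) with h | ⟨B, hB, hAB⟩
  · exact h
  · -- B contains univ \ {x,y}; identify B
    by_cases hxB : x ∈ B <;> by_cases hyB : y ∈ B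
    · exfalso
      apply hUniv
      have : B = Finset.univ := by
        apply Finset.eq_univ_of_forall
        intro z
        by_cases hz : z = x
        · rw [hz]; exact hxB
        · by_cases hz' : z = y
          · rw [hz']; exact hyB
          · exact hAB (Finset.mem_sdiff.mpr ⟨Finset.mem_univ _, by
              simp only [Finset.mem_insert, Finset.mem_singleton]
              rintro (h | h)
              · exact hz h
              · exact hz' h⟩)
      rwa [this] at hB
    · exfalso
      apply hy
      have : B = Finset.univ.erase y := by
        apply Finset.Subset.antisymm
        · intro z hz
          exact Finset.mem_erase.mpr ⟨fun h => hyB (h ▸ hz), Finset.mem_univ z⟩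
        · intro z hz
          rcases Finset.mem_erase.mp hz with ⟨hzy, _⟩
          by_cases hzx : z = x
          · rw [hzx]; exact hxB
          · exact hAB (Finset.mem_sdiff.mpr ⟨Finset.mem_univ _, by
              simp only [Finset.mem_insert, Finset.mem_singleton]
              rintro (h | h)
              · exact hzx h
              · exact hzy h⟩)
      rwa [this] at hB
    · exfalso
      apply hx
      have : B = Finset.univ.erase x := by
        apply Finset.Subset.antisymm
        · intro z hz
          exact Finset.mem_erase.mpr ⟨fun h => hxB (h ▸ hz), Finset.mem_univ z⟩
        · intro z hz
          rcases Finset.mem_erase.mp hz with ⟨hzx, _⟩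
          by_cases hzy : z = y
          · rw [hzy]; exact hyB
          · exact hAB (Finset.mem_sdiff.mpr ⟨Finset.mem_univ _, by
              simp only [Finset.mem_insert, Finset.mem_singleton]
              rintro (h | h)
              · exact hzx h
              · exact hzy h⟩)
      rwa [this] at hB
    · have : B = Finset.univ \ {x, y} := by
        apply Finset.Subset.antisymm
        · intro z hz
          simp only [Finset.mem_sdiff, Finset.mem_univ, true_and, Finset.mem_insert,
            Finset.mem_singleton]
          rintro (h | h)
          · exact hxB (h ▸ hz)
          · exact hyB (h ▸ hz)
        · exact hAB
      rwa [this] at hB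

lemma coset_mem {k : ℕ} {J : Finset (Finset (Fin k))} (hk : 3 ≤ k)
    (hrank : patternRank J = k - 1) (hUniv : (Finset.univ : Finset (Fin k)) ∉ J)
    (hJint : ∀ A ∈ J, ∀ B ∈ J, A ∩ B ∈ J)
    (Iset : Finset (Fin k)) (hIdef : ∀ x, x ∈ Iset ↔ Finset.univ.erase x ∉ J) :
    ∀ m : ℕ, ∀ P : Finset (Fin k), P.card = m →
      (2 ≤ (P ∩ Iset).card ∨ (P.Nonempty ∧ ∀ x ∈ P, x ∉ Iset)) →
      Finset.univ \ P ∈ J := by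
  intro m
  induction m using Nat.strong_induction_on with
  | _ m ih =>
    intro P hPm hcond
    rcases hcond with hI | ⟨hne, hS⟩
    · -- at least two elements of Iset in P
      by_cases hm2 : P.card = 2
      · -- P is a pair inside Iset
        have hsub : P ∩ Iset = P := by
          apply Finset.eq_of_subset_of_card_le Finset.inter_subset_left
          calc P.card = 2 := hm2
            _ ≤ (P ∩ Iset).card := hI
        have hPI : P ⊆ Iset := by rw [← hsub]; exact Finset.inter_subset_right
        obtain ⟨x, y, hxy, hPxy⟩ := Finset.card_eq_two.mp hm2
        have hx : x ∈ Iset := hPI (by rw [hPxy]; simp)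
        have hy : y ∈ Iset := hPI (by rw [hPxy]; simp)
        rw [hPxy]
        exact copair_mem hk hrank hUniv ((hIdef x).mp hx) ((hIdef y).mp hy) hxy
      · -- P.card ≥ 3
        have hm3 : 3 ≤ P.card := by
          have : 2 ≤ (P ∩ Iset).card := hI
          have h2 : (P ∩ Iset).card ≤ P.card :=
            Finset.card_le_card Finset.inter_subset_left
          omega
        by_cases hexv : ∃ v ∈ P, v ∉ Iset
        · obtain ⟨v, hvP, hvI⟩ := hexv
          have hXJ : Finset.univ.erase v ∈ J := by
            by_contra h
            exact hvI ((hIdef v).mpr h)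
          have hrec : Finset.univ \ (P.erase v) ∈ J := by
            apply ih (P.erase v).card (by rw [Finset.card_erase_of_mem hvP]; omega)
              _ rfl
            left
            have : P.erase v ∩ Iset = P ∩ Iset := by
              ext z
              simp only [Finset.mem_inter, Finset.mem_erase]
              constructor
              · rintro ⟨⟨_, h1⟩, h2⟩; exact ⟨h1, h2⟩
              · rintro ⟨h1, h2⟩
                exact ⟨⟨fun he => hvI (he ▸ h2), h1⟩, h2⟩
            rw [this]; exact hI
          have hid : (Finset.univ \ (P.erase v)) ∩ (Finset.univ.erase v) = Finset.univ \ P := by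
            ext z
            simp only [Finset.mem_inter, Finset.mem_sdiff, Finset.mem_erase, Finset.mem_univ,
              true_and, and_true]
            constructor
            · rintro ⟨h1, h2⟩
              intro hzP
              exact h1 ⟨h2, hzP⟩
            · intro h
              exact ⟨fun hc => h hc.2, fun he => h (he ▸ hvP)⟩
          rw [← hid]
          exact hJint _ hrec _ hXJ
        · -- P entirely inside Iset, card ≥ 3
          push_neg at hexv
          obtain ⟨v, hvP⟩ := Finset.card_pos.mp (by omega : 0 < P.card)
          have herase2 : 2 ≤ (P.erase v).card := by
            rw [Finset.card_erase_of_mem hvP]; omega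
          obtain ⟨u, huP⟩ := Finset.card_pos.mp (by omega : 0 < (P.erase v).card)
          have huv : u ≠ v := (Finset.mem_erase.mp huP).1
          have huPP : u ∈ P := (Finset.mem_erase.mp huP).2
          have hXJ : Finset.univ \ {v, u} ∈ J :=
            copair_mem hk hrank hUniv ((hIdef v).mp (hexv v hvP))
              ((hIdef u).mp (hexv u huPP)) (Ne.symm huv)
          have hrec : Finset.univ \ (P.erase v) ∈ J := by
            apply ih (P.erase v).card (by rw [Finset.card_erase_of_mem hvP]; omega) _ rfl
            left
            have : P.erase v ⊆ Iset := fun z hz => hexv z (Finset.mem_of_mem_erase hz)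
            calc 2 ≤ (P.erase v).card := herase2
              _ = (P.erase v ∩ Iset).card := by
                  rw [Finset.inter_eq_left.mpr this]
          have hid : (Finset.univ \ (P.erase v)) ∩ (Finset.univ \ {v, u}) =
              Finset.univ \ P := by
            ext z
            simp only [Finset.mem_inter, Finset.mem_sdiff, Finset.mem_univ, true_and,
              Finset.mem_erase, Finset.mem_insert, Finset.mem_singleton]
            constructor
            · rintro ⟨h1, h2⟩
              intro hzP
              apply h1
              constructor
              · intro he; exact h2 (Or.inl he)
              · exact hzP
            · intro h
              refine ⟨fun hc => h hc.2, ?_⟩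
              rintro (he | he)
              · exact h (he ▸ hvP)
              · exact h (he ▸ huPP)
          rw [← hid]
          exact hJint _ hrec _ hXJ
    · -- P is nonempty and entirely outside Iset
      have hm1 : 1 ≤ P.card := Finset.card_pos.mpr hne
      by_cases hm : P.card = 1
      · obtain ⟨x, hx⟩ := Finset.card_eq_one.mp hm
        have hxI : x ∉ Iset := hS x (by rw [hx]; simp)
        have : Finset.univ.erase x ∈ J := by
          by_contra h
          exact hxI ((hIdef x).mpr h)
        rw [hx, ← Finset.erase_eq]
        exact this
      · obtain ⟨v, hvP⟩ := hne
        have hXJ : Finset.univ.erase v ∈ J := by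
          by_contra h
          exact (hS v hvP) ((hIdef v).mpr h)
        have hrec : Finset.univ \ (P.erase v) ∈ J := by
          apply ih (P.erase v).card (by rw [Finset.card_erase_of_mem hvP]; omega) _ rfl
          right
          constructor
          · rw [← Finset.card_pos, Finset.card_erase_of_mem hvP]; omega
          · exact fun z hz => hS z (Finset.mem_of_mem_erase hz)
        have hid : (Finset.univ \ (P.erase v)) ∩ (Finset.univ.erase v) = Finset.univ \ P := by
          ext z
          simp only [Finset.mem_inter, Finset.mem_sdiff, Finset.mem_erase, Finset.mem_univ,
            true_and, and_true]
          constructor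
          · rintro ⟨h1, h2⟩
            intro hzP
            exact h1 ⟨h2, hzP⟩
          · intro h
            exact ⟨fun hc => h hc.2, fun he => h (he ▸ hvP)⟩
        rw [← hid]
        exact hJint _ hrec _ hXJ

/-! ### Degrees of (k-1)-subsets -/

lemma deg_pos {H : Finset (Finset ℕ)} {E E' : Finset ℕ} (hE : E ∈ H) (hE' : E' ⊆ E) :
    0 < degSet H E' :=
  Finset.card_pos.mpr ⟨E, Finset.mem_filter.mpr ⟨hE, hE'⟩⟩

lemma deg_structure {n k : ℕ} {H : Finset (Finset ℕ)}
    (hH : H ⊆ Finset.powersetCard k (Finset.Icc 1 n)) {E : Finset ℕ} (hE : E ∈ H)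
    {v : ℕ} (hv : v ∈ E) :
    degSet H (E \ {v}) =
      ((Finset.Icc 1 n).filter (fun w => w ∉ E ∧ (E \ {v}) ∪ {w} ∈ H)).card + 1 := by
  have hEcard : E.card = k := (Finset.mem_powersetCard.mp (hH hE)).2
  have hEvcard : (E \ {v}).card = k - 1 := by
    rw [Finset.card_sdiff_of_subset (Finset.singleton_subset_iff.mpr hv), hEcard, Finset.card_singleton]
  have hEk : 1 ≤ k := by
    rcases Nat.eq_zero_or_pos k with h | h
    · exfalso
      have := hEcard
      rw [h] at this
      have := Finset.card_eq_zero.mp this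
      rw [this] at hv
      exact Finset.notMem_empty v hv
    · exact h
  set F := H.filter (fun G => E \ {v} ⊆ G) with hF
  have hEF : E ∈ F := Finset.mem_filter.mpr ⟨hE, Finset.sdiff_subset⟩
  have hcard : ((Finset.Icc 1 n).filter (fun w => w ∉ E ∧ (E \ {v}) ∪ {w} ∈ H)).card
      = (F.erase E).card := by
    apply Finset.card_bij (fun w _ => (E \ {v}) ∪ {w})
    · intro w hw
      rcases Finset.mem_filter.mp hw with ⟨hwIcc, hwE, hwH⟩
      apply Finset.mem_erase.mpr
      constructor
      · intro heq
        apply hwE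
        have : w ∈ E \ {v} ∪ {w} := Finset.mem_union_right _ (Finset.mem_singleton_self w)
        rw [heq] at this
        exact this
      · exact Finset.mem_filter.mpr ⟨hwH, Finset.subset_union_left⟩
    · intro w hw w' hw' heq
      rcases Finset.mem_filter.mp hw with ⟨_, hwE, _⟩
      have : w ∈ E \ {v} ∪ {w'} := by
        rw [← heq]
        exact Finset.mem_union_right _ (Finset.mem_singleton_self w)
      rcases Finset.mem_union.mp this with h | h
      · exact absurd ((Finset.mem_sdiff.mp h).1) hwE
      · exact Finset.mem_singleton.mp h
    · intro G hG
      rcases Finset.mem_erase.mp hG with ⟨hGne, hGF⟩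
      rcases Finset.mem_filter.mp hGF with ⟨hGH, hGsub⟩
      have hGcard : G.card = k := (Finset.mem_powersetCard.mp (hH hGH)).2
      have hex : ∃ w ∈ G, w ∉ E := by
        by_contra hc
        push_neg at hc
        exact hGne (Finset.eq_of_subset_of_card_le hc (by omega))
      obtain ⟨w, hwG, hwE⟩ := hex
      have hwv : w ∉ E \ {v} := fun h => hwE (Finset.mem_sdiff.mp h).1
      have hsub : E \ {v} ∪ {w} ⊆ G := by
        apply Finset.union_subset hGsub
        exact Finset.singleton_subset_iff.mpr hwG
      have hucard : (E \ {v} ∪ {w}).card = k := by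
        rw [Finset.card_union_of_disjoint (by simpa using hwv)]
        rw [hEvcard, Finset.card_singleton]
        omega
      have hGeq : E \ {v} ∪ {w} = G := Finset.eq_of_subset_of_card_le hsub (by omega)
      refine ⟨w, Finset.mem_filter.mpr ⟨?_, hwE, by rw [hGeq]; exact hGH⟩, hGeq⟩
      have : G ⊆ Finset.Icc 1 n := (Finset.mem_powersetCard.mp (hH hGH)).1
      exact this hwG
  rw [degSet, ← hF, hcard, Finset.card_erase_of_mem hEF]
  have : 0 < F.card := Finset.card_pos.mpr ⟨E, hEF⟩
  omega

/-! ### Lower bounds on the weight -/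

lemma weight_lower {n k : ℕ} {H : Finset (Finset ℕ)}
    (hH : H ⊆ Finset.powersetCard k (Finset.Icc 1 n))
    {E : Finset ℕ} (hE : E ∈ H)
    (T : Finset ℕ) (hT : T ⊆ E) (β : ℕ) (hβ : 1 ≤ β)
    (hdeg : ∀ v ∈ T, degSet H (E \ {v}) ≤ β) :
    (T.card : ℝ) / (β : ℝ) ≤ weight k H E := by
  have hEcard : E.card = k := (Finset.mem_powersetCard.mp (hH hE)).2
  have hinj : Set.InjOn (fun v => E \ {v}) T := by
    intro v hv v' hv' heq
    simp only at heq
    have h1 : E \ (E \ {v}) = {v} := by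
      rw [Finset.sdiff_sdiff_self_left]
      exact Finset.inter_eq_right.mpr (Finset.singleton_subset_iff.mpr (hT hv))
    have h2 : E \ (E \ {v'}) = {v'} := by
      rw [Finset.sdiff_sdiff_self_left]
      exact Finset.inter_eq_right.mpr (Finset.singleton_subset_iff.mpr (hT hv'))
    have : ({v} : Finset ℕ) = {v'} := by rw [← h1, ← h2, heq]
    exact Finset.singleton_injective this
  have hmapsto : ∀ v ∈ T, E \ {v} ∈ Finset.powersetCard (k - 1) E := by
    intro v hv
    apply Finset.mem_powersetCard.mpr
    refine ⟨Finset.sdiff_subset, ?_⟩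
    rw [Finset.card_sdiff_of_subset (Finset.singleton_subset_iff.mpr (hT hv)), hEcard,
      Finset.card_singleton]
  have hβpos : (0 : ℝ) < β := by
    have : (1 : ℝ) ≤ β := by exact_mod_cast hβ
    linarith
  calc (T.card : ℝ) / β = ∑ _v ∈ T, (1 : ℝ) / β := by
        rw [Finset.sum_const, nsmul_eq_mul]
        ring
    _ ≤ ∑ v ∈ T, (1 : ℝ) / (degSet H (E \ {v}) : ℝ) := by
        apply Finset.sum_le_sum
        intro v hv
        apply one_div_le_one_div_of_le
        · exact_mod_cast deg_pos hE (Finset.sdiff_subset)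
        · exact_mod_cast hdeg v hv
    _ = ∑ E' ∈ T.image (fun v => E \ {v}), (1 : ℝ) / (degSet H E' : ℝ) := by
        rw [Finset.sum_image]
        intro v hv v' hv' heq
        exact hinj hv hv' heq
    _ ≤ weight k H E := by
        apply Finset.sum_le_sum_of_subset_of_nonneg
        · intro E' hE'
          obtain ⟨v, hv, hveq⟩ := Finset.mem_image.mp hE'
          rw [← hveq]
          exact hmapsto v hv
        · intro E' _ _
          positivity

end
end S19
namespace S19
noncomputable section
open Classical Finset

set_option maxHeartbeats 2000000 in
/-- T1-style contradiction: a host-`E` system built from slot edges and sunflowers. -/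
lemma t1_false {n p k d s : ℕ} (hp : 2 ≤ p) (hpd : p ≤ d) (hpk : p < k) (hk : 3 ≤ k)
    (hs : k * d + 1 ≤ s)
    (a : Fin p → ℕ) (ha : ∀ i, 0 < a i) (hsum : ∑ i, a i = k)
    {H Hstar : Finset (Finset ℕ)} {J : Finset (Finset (Fin k))}
    (hH : H ⊆ Finset.powersetCard k (Finset.Icc 1 n)) (hsub : Hstar ⊆ H)
    (hfree : ¬ ContainsADSystem p a d H)
    {V : Fin k → Finset ℕ}
    (hVd : ∀ i j, i ≠ j → Disjoint (V i) (V j))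
    (hVs : Finset.univ.sup V = Finset.Icc 1 n)
    (hV1 : ∀ E ∈ Hstar, ∀ i, (E ∩ V i).card = 1)
    (hProj : ∀ E ∈ Hstar, (interStruct Hstar E).image (proj V) = J)
    (hSun : ∀ E ∈ Hstar, ∀ C ∈ interStruct Hstar E,
      ∃ D : Finset (Finset ℕ), D ⊆ Hstar ∧ E ∈ D ∧ D.card = s ∧ IsDeltaSystem D C)
    {E : Finset ℕ} (hE : E ∈ Hstar)
    {Iset : Finset (Fin k)}
    (hJcoset : ∀ P : Finset (Fin k),
      (2 ≤ (P ∩ Iset).card ∨ (P.Nonempty ∧ ∀ x ∈ P, x ∉ Iset)) → Finset.univ \ P ∈ J)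
    {T0 : Finset (Fin k)} (hT0I : T0 ⊆ Iset)
    {wf : Fin k → ℕ}
    (hwf : ∀ x ∈ T0, wf x ∉ E ∧ (E \ {vmap V E x}) ∪ {wf x} ∈ H)
    (hwinj : ∀ x ∈ T0, ∀ y ∈ T0, wf x = wf y → x = y)
    {slotparts : Finset (Fin p)} (hslotsub : ∀ j ∈ slotparts, a j = 1)
    (hslotcard : slotparts.card = T0.card)
    {cdist : Fin p → ℕ}
    (hcd0 : ∀ j, cdist j ≠ 0 → 2 ≤ a j)
    (hcdcond : ∀ j, cdist j = 0 ∨ (2 ≤ cdist j ∧ cdist j ≤ a j))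
    (hcdsum : ∑ j, cdist j = Iset.card - T0.card)
    (hT0le : T0.card ≤ Iset.card) :
    False := by
  have hEH : E ∈ H := hsub hE
  have hEsub : E ⊆ Finset.Icc 1 n := (Finset.mem_powersetCard.mp (hH hEH)).1
  have hEcard : E.card = k := (Finset.mem_powersetCard.mp (hH hEH)).2
  have hE1 : ∀ i, (E ∩ V i).card = 1 := hV1 E hE
  set e := vmap V E with he
  have heinj : Function.Injective e := vmap_inj hE1 hVd
  -- the three partial partitions of the index set
  obtain ⟨P1, hP1none, hP1card, hP1sub, hP1disj, hP1cover⟩ :=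
    partition_exists slotparts T0 (fun _ => 1)
      (by rw [Finset.sum_const, smul_eq_mul, mul_one]; exact hslotcard)
  obtain ⟨P2, hP2none, hP2card, hP2sub, hP2disj, hP2cover⟩ :=
    partition_exists Finset.univ (Iset \ T0) cdist
      (by rw [hcdsum, Finset.card_sdiff_of_subset hT0I])
  -- the S-side multiplicities
  set f3 : Fin p → ℕ := fun j => if a j = 1 then (if j ∈ slotparts then 0 else 1)
    else a j - cdist j with hf3
  have hf3sum : ∑ j, f3 j = (Finset.univ \ Iset).card := by
    have hptw : ∀ j : Fin p, f3 j + cdist j + (if j ∈ slotparts then 1 else 0) = a j := by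
      intro j
      by_cases h1 : a j = 1
      · have hc0 : cdist j = 0 := by
          by_contra hc
          have := hcd0 j hc
          omega
        by_cases h2 : j ∈ slotparts
        · simp [hf3, h1, h2, hc0]
        · simp [hf3, h1, h2, hc0]
      · have h2 : j ∉ slotparts := fun h => h1 (hslotsub j h)
        have hcle : cdist j ≤ a j := by
          rcases hcdcond j with h | ⟨_, h⟩
          · omega
          · exact h
        simp only [hf3, h1, if_false, h2, if_neg h2]
        omega
    have htot : ∑ j, (f3 j + cdist j + (if j ∈ slotparts then 1 else 0)) = k := by
      rw [Finset.sum_congr rfl (fun j _ => hptw j)]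
      exact hsum
    rw [Finset.sum_add_distrib, Finset.sum_add_distrib] at htot
    have hind : ∑ j, (if j ∈ slotparts then 1 else 0) = slotparts.card := by
      rw [Finset.sum_ite_mem, Finset.univ_inter, Finset.sum_const, smul_eq_mul, mul_one]
    rw [hind, hcdsum] at htot
    have hIcard : Iset.card ≤ k := by
      calc Iset.card ≤ (Finset.univ : Finset (Fin k)).card := Finset.card_le_card (Finset.subset_univ _)
        _ = k := by rw [Finset.card_univ, Fintype.card_fin]
    rw [Finset.card_sdiff_of_subset (Finset.subset_univ Iset), Finset.card_univ, Fintype.card_fin]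
    omega
  obtain ⟨P3, hP3none, hP3card, hP3sub, hP3disj, hP3cover⟩ :=
    partition_exists Finset.univ (Finset.univ \ Iset) f3 hf3sum
  -- combine
  set P : Fin p → Finset (Fin k) := fun j => P1 j ∪ P2 j ∪ P3 j with hP
  -- the three regions are pairwise disjoint
  have hreg12 : Disjoint T0 (Iset \ T0) := Finset.disjoint_sdiff
  have hreg13 : Disjoint T0 (Finset.univ \ Iset) :=
    Finset.disjoint_of_subset_left hT0I Finset.disjoint_sdiff
  have hreg23 : Disjoint (Iset \ T0) (Finset.univ \ Iset) :=
    Finset.disjoint_of_subset_left Finset.sdiff_subset Finset.disjoint_sdiff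
  have hPdisj : ∀ j j', j ≠ j' → Disjoint (P j) (P j') := by
    intro j j' hne
    rw [hP]
    simp only
    apply Finset.disjoint_union_left.mpr
    refine ⟨Finset.disjoint_union_left.mpr ⟨?_, ?_⟩, ?_⟩
    · apply Finset.disjoint_union_right.mpr
      refine ⟨Finset.disjoint_union_right.mpr ⟨hP1disj j j' hne, ?_⟩, ?_⟩
      · exact Finset.disjoint_of_subset_left (hP1sub j)
          (Finset.disjoint_of_subset_right (hP2sub j') hreg12)
      · exact Finset.disjoint_of_subset_left (hP1sub j)
          (Finset.disjoint_of_subset_right (hP3sub j') hreg13)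
    · apply Finset.disjoint_union_right.mpr
      refine ⟨Finset.disjoint_union_right.mpr ⟨?_, hP2disj j j' hne⟩, ?_⟩
      · exact Finset.disjoint_of_subset_left (hP2sub j)
          (Finset.disjoint_of_subset_right (hP1sub j') hreg12.symm)
      · exact Finset.disjoint_of_subset_left (hP2sub j)
          (Finset.disjoint_of_subset_right (hP3sub j') hreg23)
    · apply Finset.disjoint_union_right.mpr
      refine ⟨Finset.disjoint_union_right.mpr ⟨?_, ?_⟩, hP3disj j j' hne⟩
      · exact Finset.disjoint_of_subset_left (hP3sub j)
          (Finset.disjoint_of_subset_right (hP1sub j') hreg13.symm)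
      · exact Finset.disjoint_of_subset_left (hP3sub j)
          (Finset.disjoint_of_subset_right (hP2sub j') hreg23.symm)
  -- slot parts are singletons; P2/P3 vanish there
  have hP2slot : ∀ j ∈ slotparts, P2 j = ∅ := by
    intro j hj
    have hc0 : cdist j = 0 := by
      by_contra hc
      have := hcd0 j hc
      have := hslotsub j hj
      omega
    have := hP2card j (Finset.mem_univ j)
    rw [hc0] at this
    exact Finset.card_eq_zero.mp this
  have hP3slot : ∀ j ∈ slotparts, P3 j = ∅ := by
    intro j hj
    have : f3 j = 0 := by simp [hf3, hslotsub j hj, hj]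
    have h := hP3card j (Finset.mem_univ j)
    rw [this] at h
    exact Finset.card_eq_zero.mp h
  have hslotx : ∀ j ∈ slotparts, ∃ x ∈ T0, P j = {x} := by
    intro j hj
    have hcard1 : (P1 j).card = 1 := hP1card j hj
    obtain ⟨x, hx⟩ := Finset.card_eq_one.mp hcard1
    refine ⟨x, ?_, ?_⟩
    · have := hP1sub j
      rw [hx] at this
      exact this (Finset.mem_singleton_self x)
    · rw [hP]
      simp only
      rw [hP2slot j hj, hP3slot j hj, hx]
      simp
  -- cardinalities
  have hPcard : ∀ j, (P j).card = a j := by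
    intro j
    have hd12 : Disjoint (P1 j) (P2 j) := Finset.disjoint_of_subset_left (hP1sub j)
      (Finset.disjoint_of_subset_right (hP2sub j) hreg12)
    have hd13 : Disjoint (P1 j ∪ P2 j) (P3 j) := by
      apply Finset.disjoint_union_left.mpr
      exact ⟨Finset.disjoint_of_subset_left (hP1sub j)
          (Finset.disjoint_of_subset_right (hP3sub j) hreg13),
        Finset.disjoint_of_subset_left (hP2sub j)
          (Finset.disjoint_of_subset_right (hP3sub j) hreg23)⟩
    rw [hP]
    simp only
    rw [Finset.card_union_of_disjoint hd13, Finset.card_union_of_disjoint hd12]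
    by_cases hj : j ∈ slotparts
    · rw [hP1card j hj]
      have h2 := hP2slot j hj
      have h3 := hP3slot j hj
      rw [h2, h3]
      simp [hslotsub j hj]
    · rw [hP1none j hj]
      simp only [Finset.card_empty, zero_add]
      rw [hP2card j (Finset.mem_univ j), hP3card j (Finset.mem_univ j)]
      by_cases h1 : a j = 1
      · have hc0 : cdist j = 0 := by
          by_contra hc
          have := hcd0 j hc
          omega
        simp [hf3, h1, hj, hc0]
      · have hcle : cdist j ≤ a j := by
          rcases hcdcond j with h | ⟨_, h⟩
          · omega
          · exact h
        simp only [hf3, h1, if_false]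
        omega
  -- the pieces cover everything
  have hPcover : Finset.univ.biUnion P = Finset.univ := by
    apply Finset.Subset.antisymm (Finset.subset_univ _)
    intro z _
    by_cases hz1 : z ∈ T0
    · rw [← hP1cover] at hz1
      obtain ⟨j, hjmem, hjz⟩ := Finset.mem_biUnion.mp hz1
      exact Finset.mem_biUnion.mpr ⟨j, Finset.mem_univ j,
        by rw [hP]; simp only; exact Finset.mem_union_left _ (Finset.mem_union_left _ hjz)⟩
    · by_cases hz2 : z ∈ Iset
      · have : z ∈ Iset \ T0 := Finset.mem_sdiff.mpr ⟨hz2, hz1⟩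
        rw [← hP2cover] at this
        obtain ⟨j, hjmem, hjz⟩ := Finset.mem_biUnion.mp this
        exact Finset.mem_biUnion.mpr ⟨j, Finset.mem_univ j,
          by rw [hP]; simp only; exact Finset.mem_union_left _ (Finset.mem_union_right _ hjz)⟩
      · have : z ∈ Finset.univ \ Iset := Finset.mem_sdiff.mpr ⟨Finset.mem_univ z, hz2⟩
        rw [← hP3cover] at this
        obtain ⟨j, hjmem, hjz⟩ := Finset.mem_biUnion.mp this
        exact Finset.mem_biUnion.mpr ⟨j, Finset.mem_univ j,
          by rw [hP]; simp only; exact Finset.mem_union_right _ hjz⟩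
  -- the vertex partition
  set A : Fin p → Finset ℕ := fun j => (P j).image e with hA
  have hApart : IsAPartition p a A E := by
    refine ⟨?_, ?_, ?_⟩
    · intro j
      rw [hA]
      simp only
      rw [Finset.card_image_of_injective _ heinj, hPcard j]
    · intro i j hij
      rw [hA]
      simp only
      rw [Finset.disjoint_image heinj]
      exact hPdisj i j hij
    · rw [Finset.sup_eq_biUnion]
      have : (Finset.univ.biUnion fun j => (P j).image e) = (Finset.univ.biUnion P).image e := by
        rw [Finset.biUnion_image]
      rw [hA]
      rw [this, hPcover]
      exact vmap_image_univ hE1 hVs hEsub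
  -- center identification
  have hcenter : ∀ j, E \ A j = (Finset.univ \ P j).image e :=
    fun j => image_compl hE1 hVd hVs hEsub (P j)
  -- classification of the non-slot parts
  have hclass : ∀ j, j ∉ slotparts →
      (2 ≤ ((P j) ∩ Iset).card ∨ ((P j).Nonempty ∧ ∀ x ∈ P j, x ∉ Iset)) := by
    intro j hj
    have hP1e : P1 j = ∅ := hP1none j hj
    by_cases h1 : a j = 1
    · right
      have hc0 : cdist j = 0 := by
        by_contra hc; have := hcd0 j hc; omega
      have hP2e : P2 j = ∅ := by
        have := hP2card j (Finset.mem_univ j)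
        rw [hc0] at this
        exact Finset.card_eq_zero.mp this
      have hPeq : P j = P3 j := by
        rw [hP]; simp only; rw [hP1e, hP2e]; simp
      constructor
      · rw [← Finset.card_pos, hPcard j]
        omega
      · intro x hx
        rw [hPeq] at hx
        exact (Finset.mem_sdiff.mp (hP3sub j hx)).2
    · -- a j ≥ 2
      have ha2 : 2 ≤ a j := by have := ha j; omega
      rcases hcdcond j with hc0 | ⟨hc2, hcle⟩
      · right
        have hP2e : P2 j = ∅ := by
          have := hP2card j (Finset.mem_univ j)
          rw [hc0] at this
          exact Finset.card_eq_zero.mp this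
        have hPeq : P j = P3 j := by
          rw [hP]; simp only; rw [hP1e, hP2e]; simp
        constructor
        · rw [← Finset.card_pos, hPcard j]; omega
        · intro x hx
          rw [hPeq] at hx
          exact (Finset.mem_sdiff.mp (hP3sub j hx)).2
      · left
        have hsubI : P2 j ⊆ P j ∩ Iset := by
          intro z hz
          refine Finset.mem_inter.mpr ⟨?_, (Finset.mem_sdiff.mp (hP2sub j hz)).1⟩
          rw [hP]; simp only
          exact Finset.mem_union_left _ (Finset.mem_union_right _ hz)
        calc 2 ≤ cdist j := hc2
          _ = (P2 j).card := (hP2card j (Finset.mem_univ j)).symm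
          _ ≤ ((P j) ∩ Iset).card := Finset.card_le_card hsubI
  -- sources for the non-slot parts: sunflower petals
  have hsrcng : ∀ j : Fin p, ∃ petals : Finset (Finset ℕ), j ∉ slotparts →
      (petals.card = s - 1 ∧ E ∉ petals ∧ petals ⊆ Hstar ∧
        (∀ G ∈ petals, E ∩ G = E \ A j) ∧
        (∀ G ∈ petals, ∀ G' ∈ petals, G ≠ G' → G ∩ G' = E \ A j)) := by
    intro j
    by_cases hj : j ∈ slotparts
    · exact ⟨∅, fun hc => absurd hj hc⟩
    · have hBJ : Finset.univ \ P j ∈ J := hJcoset (P j) (hclass j hj)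
      obtain ⟨petals, hc1, hc2, hc3, hc4, hc5⟩ :=
        petals_of_J hVd hVs hProj hSun hE hEsub hE1 hBJ
      rw [← hcenter j] at hc4 hc5
      exact ⟨petals, fun _ => ⟨hc1, hc2, hc3, hc4, hc5⟩⟩
  choose src0 hsrc0 using hsrcng
  -- slot edges
  set Fedge : Fin p → Finset ℕ := fun j => (E \ A j) ∪ (P j).image wf with hFe
  set src : Fin p → Finset (Finset ℕ) :=
    fun j => if j ∈ slotparts then {Fedge j} else src0 j with hsrc
  -- facts about slot edges
  have hslotF : ∀ j ∈ slotparts, ∃ x ∈ T0,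
      A j = {e x} ∧ Fedge j = (E \ {e x}) ∪ {wf x} := by
    intro j hj
    obtain ⟨x, hxT0, hPx⟩ := hslotx j hj
    refine ⟨x, hxT0, ?_, ?_⟩
    · rw [hA]; simp only; rw [hPx, Finset.image_singleton]
    · rw [hFe]; simp only; rw [hPx, Finset.image_singleton, hA]
      simp only
      rw [hPx, Finset.image_singleton]
  -- a part of size ≥ 2 exists, not a slot
  have hbig_ex : ∃ j1 : Fin p, 2 ≤ a j1 := by
    by_contra hc
    push_neg at hc
    have : ∀ j : Fin p, a j = 1 := by
      intro j; have := ha j; have := hc j; omega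
    have : ∑ j, a j = p := by
      rw [Finset.sum_congr rfl (fun j _ => this j), Finset.sum_const, smul_eq_mul,
        mul_one, Finset.card_univ, Fintype.card_fin]
    omega
  obtain ⟨j1, hj1big⟩ := hbig_ex
  have hj1ns : j1 ∉ slotparts := fun h => by have := hslotsub j1 h; omega
  -- apply the builder
  apply hfree
  apply buildSystem hpd (by omega : 1 ≤ k) hs a H hH E hEH A hApart src ?_ ?_ ?_ ?_
    slotparts ?_ ?_ ?_ j1 hj1ns
  · -- src j ⊆ H
    intro j
    by_cases hj : j ∈ slotparts
    · rw [hsrc]; simp only [if_pos hj]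
      intro G hG
      rw [Finset.mem_singleton.mp hG]
      obtain ⟨x, hxT0, hAx, hFx⟩ := hslotF j hj
      rw [hFx]
      exact (hwf x hxT0).2
    · rw [hsrc]; simp only [if_neg hj]
      exact fun G hG => hsub (((hsrc0 j hj).2.2.1) hG)
  · -- E ∉ src j
    intro j
    by_cases hj : j ∈ slotparts
    · rw [hsrc]; simp only [if_pos hj]
      intro hG
      obtain ⟨x, hxT0, hAx, hFx⟩ := hslotF j hj
      have hwE : wf x ∉ E := (hwf x hxT0).1
      rw [Finset.mem_singleton] at hG
      apply hwE
      rw [hG, hFx]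
      exact Finset.mem_union_right _ (Finset.mem_singleton_self _)
    · rw [hsrc]; simp only [if_neg hj]
      exact (hsrc0 j hj).2.1
  · -- intersections with E
    intro j G hG
    by_cases hj : j ∈ slotparts
    · rw [hsrc] at hG; simp only [if_pos hj] at hG
      rw [Finset.mem_singleton.mp hG]
      obtain ⟨x, hxT0, hAx, hFx⟩ := hslotF j hj
      have hwE : wf x ∉ E := (hwf x hxT0).1
      rw [hFx, hAx]
      rw [Finset.inter_union_distrib_left]
      have h1 : E ∩ (E \ {e x}) = E \ {e x} :=
        Finset.inter_eq_right.mpr Finset.sdiff_subset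
      have h2 : E ∩ {wf x} = ∅ := by
        rw [Finset.inter_singleton_of_notMem hwE]
      rw [h1, h2, Finset.union_empty]
    · rw [hsrc] at hG; simp only [if_neg hj] at hG
      exact (hsrc0 j hj).2.2.2.1 G hG
  · -- pairwise intersections within a part
    intro j G hG G' hG' hne
    by_cases hj : j ∈ slotparts
    · rw [hsrc] at hG hG'; simp only [if_pos hj] at hG hG'
      rw [Finset.mem_singleton.mp hG, Finset.mem_singleton.mp hG'] at hne
      exact absurd rfl hne
    · rw [hsrc] at hG hG'; simp only [if_neg hj] at hG hG'
      exact (hsrc0 j hj).2.2.2.2 G hG G' hG' hne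
  · -- slots have exactly one petal
    intro j hj
    rw [hsrc]; simp only [if_pos hj]
    exact Finset.card_singleton _
  · -- slot differences are pairwise disjoint
    intro j hj j' hj' hne G hG G' hG'
    rw [hsrc] at hG hG'; simp only [if_pos hj] at hG; simp only [if_pos hj'] at hG'
    obtain ⟨x, hxT0, hAx, hFx⟩ := hslotF j hj
    obtain ⟨x', hxT0', hAx', hFx'⟩ := hslotF j' hj'
    rw [Finset.mem_singleton.mp hG, hFx, Finset.mem_singleton.mp hG', hFx']
    have hdiff : ((E \ {e x}) ∪ {wf x}) \ E = {wf x} := by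
      rw [Finset.union_sdiff_distrib]
      rw [Finset.sdiff_eq_empty_iff_subset.mpr ((Finset.sdiff_subset).trans (by rfl))]
      rw [Finset.empty_union]
      rw [Finset.sdiff_eq_self_iff_disjoint]
      exact Finset.disjoint_singleton_left.mpr (hwf x hxT0).1
    have hdiff' : ((E \ {e x'}) ∪ {wf x'}) \ E = {wf x'} := by
      rw [Finset.union_sdiff_distrib]
      rw [Finset.sdiff_eq_empty_iff_subset.mpr ((Finset.sdiff_subset).trans (by rfl))]
      rw [Finset.empty_union]
      rw [Finset.sdiff_eq_self_iff_disjoint]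
      exact Finset.disjoint_singleton_left.mpr (hwf x' hxT0').1
    rw [hdiff, hdiff']
    rw [Finset.disjoint_singleton]
    intro hww
    have hxx : x = x' := hwinj x hxT0 x' hxT0' hww
    -- but x ∈ P j and x' ∈ P j', and P j, P j' are disjoint
    obtain ⟨y, hyT0, hPy⟩ := hslotx j hj
    obtain ⟨y', hyT0', hPy'⟩ := hslotx j' hj'
    -- A j = {e x} forces P j = {x}
    have hex : x ∈ P j := by
      have : e y ∈ A j := by
        rw [hA]; simp only; rw [hPy, Finset.image_singleton]; simp
      rw [hAx] at this
      have := heinj (Finset.mem_singleton.mp this)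
      rw [hPy, this]
      simp
    have hex' : x' ∈ P j' := by
      have : e y' ∈ A j' := by
        rw [hA]; simp only; rw [hPy', Finset.image_singleton]; simp
      rw [hAx'] at this
      have := heinj (Finset.mem_singleton.mp this)
      rw [hPy', this]
      simp
    rw [← hxx] at hex'
    exact (Finset.disjoint_left.mp (hPdisj j j' hne)) hex hex'
  · -- non-slots have many petals
    intro j hj
    rw [hsrc]; simp only [if_neg hj]
    rw [(hsrc0 j hj).1]

end
end S19
namespace S19
noncomputable section
open Classical Finset

set_option maxHeartbeats 2000000 in
/-- T2-style contradiction: all parts of size 2, host is a petal `X` of the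
co-singleton sunflower, one slot uses the extra edge `F`. -/
lemma t2_false {n p k d s : ℕ} (hp : 2 ≤ p) (hpd : p ≤ d) (hk : 3 ≤ k)
    (hs : k * d + 1 ≤ s)
    (a : Fin p → ℕ) (ha2 : ∀ j, a j = 2) (hsum : ∑ j, a j = k)
    {H Hstar : Finset (Finset ℕ)} {J : Finset (Finset (Fin k))}
    (hH : H ⊆ Finset.powersetCard k (Finset.Icc 1 n)) (hsub : Hstar ⊆ H)
    (hfree : ¬ ContainsADSystem p a d H)
    {V : Fin k → Finset ℕ}
    (hVd : ∀ i j, i ≠ j → Disjoint (V i) (V j))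
    (hVs : Finset.univ.sup V = Finset.Icc 1 n)
    (hV1 : ∀ E ∈ Hstar, ∀ i, (E ∩ V i).card = 1)
    (hProj : ∀ E ∈ Hstar, (interStruct Hstar E).image (proj V) = J)
    (hSun : ∀ E ∈ Hstar, ∀ C ∈ interStruct Hstar E,
      ∃ D : Finset (Finset ℕ), D ⊆ Hstar ∧ E ∈ D ∧ D.card = s ∧ IsDeltaSystem D C)
    {E : Finset ℕ} (hE : E ∈ Hstar)
    {Iset : Finset (Fin k)} (hIdef : ∀ x, x ∈ Iset ↔ Finset.univ.erase x ∉ J)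
    (hJcoset : ∀ P : Finset (Fin k),
      (2 ≤ (P ∩ Iset).card ∨ (P.Nonempty ∧ ∀ x ∈ P, x ∉ Iset)) → Finset.univ \ P ∈ J)
    {i : Fin k} (hi : i ∈ Iset) {t : Fin k} (ht : t ∉ Iset)
    {w : ℕ} (hw : w ∉ E) (hwH : (E \ {vmap V E i}) ∪ {w} ∈ H)
    (hq2 : 2 ≤ Iset.card) (hqodd : Odd Iset.card) :
    False := by
  have hd2 : 2 ≤ d := le_trans hp hpd
  have hEH : E ∈ H := hsub hE
  have hEsub : E ⊆ Finset.Icc 1 n := (Finset.mem_powersetCard.mp (hH hEH)).1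
  have hEcard : E.card = k := (Finset.mem_powersetCard.mp (hH hEH)).2
  have hE1 : ∀ i, (E ∩ V i).card = 1 := hV1 E hE
  set e := vmap V E with he
  have heinj : Function.Injective e := vmap_inj hE1 hVd
  have hit : i ≠ t := fun h => ht (h ▸ hi)
  have htJ : Finset.univ.erase t ∈ J := by
    by_contra h
    exact ht ((hIdef t).mpr h)
  -- the sunflower with center E minus the t-th vertex
  obtain ⟨petals, hpc, hpE, hpH, hpC, hpP⟩ :=
    petals_of_J hVd hVs hProj hSun hE hEsub hE1 htJ
  set CB := (Finset.univ.erase t).image e with hCB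
  have hCBE : CB ⊆ E := by
    intro z hz
    obtain ⟨j, _, hj⟩ := Finset.mem_image.mp hz
    rw [← hj]
    exact (vmap_mem hE1 j).1
  have hwCB : w ∉ CB := fun h => hw (hCBE h)
  -- at most one petal contains w
  have hbadle : (petals.filter (fun G => w ∈ G)).card ≤ 1 := by
    apply Finset.card_le_one.mpr
    intro G hG G' hG'
    by_contra hne
    have := hpP G (Finset.mem_filter.mp hG).1 G' (Finset.mem_filter.mp hG').1 hne
    have hwmem : w ∈ G ∩ G' := Finset.mem_inter.mpr
      ⟨(Finset.mem_filter.mp hG).2, (Finset.mem_filter.mp hG').2⟩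
    rw [this] at hwmem
    exact hwCB hwmem
  have hgoodne : (petals \ petals.filter (fun G => w ∈ G)).Nonempty := by
    rw [← Finset.card_pos, Finset.card_sdiff_of_subset (Finset.filter_subset _ _), hpc]
    have : 2 ≤ k * d := by
      calc 2 ≤ 2 * 2 := by omega
        _ ≤ k * d := Nat.mul_le_mul (by omega) hd2
    omega
  obtain ⟨X, hX⟩ := hgoodne
  rcases Finset.mem_sdiff.mp hX with ⟨hXpet, hXw⟩
  have hwX : w ∉ X := fun h => hXw (Finset.mem_filter.mpr ⟨hXpet, h⟩)
  have hXstar : X ∈ Hstar := hpH hXpet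
  have hXH : X ∈ H := hsub hXstar
  have hXsub : X ⊆ Finset.Icc 1 n := (Finset.mem_powersetCard.mp (hH hXH)).1
  have hXcard : X.card = k := (Finset.mem_powersetCard.mp (hH hXH)).2
  have hX1 : ∀ i, (X ∩ V i).card = 1 := hV1 X hXstar
  have hEX : E ∩ X = CB := hpC X hXpet
  set xe := vmap V X with hxe
  have hxeinj : Function.Injective xe := vmap_inj hX1 hVd
  have hCBX : CB ⊆ X := by
    rw [← hEX]; exact Finset.inter_subset_right
  have hxe_eq : ∀ j : Fin k, j ≠ t → xe j = e j := by
    intro j hj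
    have hej : e j ∈ CB := by
      rw [hCB]
      exact Finset.mem_image_of_mem _ (Finset.mem_erase.mpr ⟨hj, Finset.mem_univ j⟩)
    exact vmap_eq_of_mem hX1 (hCBX hej) (vmap_mem hE1 j).2
  have hxtE : xe t ∉ E := by
    intro hmem
    have : e t = xe t := vmap_eq_of_mem hE1 hmem (vmap_mem hX1 t).2
    have hetX : e t ∈ X := this ▸ (vmap_mem hX1 t).1
    have : e t ∈ CB := by
      rw [← hEX]
      exact Finset.mem_inter.mpr ⟨(vmap_mem hE1 t).1, hetX⟩
    rw [hCB] at this
    obtain ⟨j, hjmem, hje⟩ := Finset.mem_image.mp this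
    exact (Finset.mem_erase.mp hjmem).1 (heinj hje)
  have hxei : xe i = e i := hxe_eq i hit
  -- the special edge F
  set F := (E \ {e i}) ∪ {w} with hF
  have hFH : F ∈ H := hwH
  have hFX : F ≠ X := by
    intro h
    apply hwX
    rw [← h, hF]
    exact Finset.mem_union_right _ (Finset.mem_singleton_self w)
  -- indices
  have hp0 : 0 < p := by omega
  have hp1 : 1 < p := by omega
  set j0 : Fin p := ⟨0, hp0⟩ with hj0
  set j1 : Fin p := ⟨1, hp1⟩ with hj1
  have hj01 : j1 ≠ j0 := by
    rw [hj0, hj1]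
    intro h
    have := Fin.mk.inj_iff.mp h
    omega
  -- sum of sizes over the rest
  have hsum' : ∑ j ∈ Finset.univ.erase j0, a j = k - 2 := by
    have := Finset.add_sum_erase Finset.univ a (Finset.mem_univ j0)
    rw [ha2 j0] at this
    omega
  have hkq : Iset.card ≤ k - 1 := by
    have hsubI : Iset ⊆ Finset.univ.erase t := by
      intro z hz
      exact Finset.mem_erase.mpr ⟨fun h => ht (h ▸ hz), Finset.mem_univ z⟩
    calc Iset.card ≤ (Finset.univ.erase t).card := Finset.card_le_card hsubI
      _ = k - 1 := by rw [Finset.card_erase_of_mem (Finset.mem_univ t), Finset.card_univ,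
            Fintype.card_fin]
  have hq3 : 3 ≤ Iset.card := by
    rcases hqodd with ⟨m, hm⟩
    omega
  -- distribute the remaining I-elements in pairs
  obtain ⟨cdist, hcd0, hcdcond, hcdsum⟩ := distr a (Finset.univ.erase j0)
    (fun j _ => by rw [ha2 j]) (Iset.card - 1) (by omega)
    (by rw [hsum']; omega)
    (Or.inl (by rcases hqodd with ⟨m, hm⟩; exact ⟨m, by omega⟩))
  -- pattern partitions
  obtain ⟨P2, hP2none, hP2card, hP2sub, hP2disj, hP2cover⟩ :=
    partition_exists (Finset.univ.erase j0) (Iset.erase i) cdist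
      (by rw [hcdsum, Finset.card_erase_of_mem hi])
  set f3 : Fin p → ℕ := fun j => if j = j0 then 0 else a j - cdist j with hf3
  have hf3sum : ∑ j ∈ Finset.univ.erase j0, f3 j = ((Finset.univ \ Iset).erase t).card := by
    have h1 : ∀ j ∈ Finset.univ.erase j0, f3 j = a j - cdist j := by
      intro j hj
      rw [hf3]
      simp only [if_neg (Finset.mem_erase.mp hj).1]
    rw [Finset.sum_congr rfl h1]
    have h2 : ∀ j ∈ Finset.univ.erase j0, cdist j ≤ a j := by
      intro j hj
      rcases hcdcond j (by exact hj) with h | ⟨_, h⟩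
      · omega
      · exact h
    have h4 : ∑ j ∈ Finset.univ.erase j0, ((a j - cdist j) + cdist j) =
        ∑ j ∈ Finset.univ.erase j0, a j :=
      Finset.sum_congr rfl (fun j hj => by have := h2 j hj; omega)
    rw [Finset.sum_add_distrib] at h4
    have htmem : t ∈ Finset.univ \ Iset := Finset.mem_sdiff.mpr ⟨Finset.mem_univ t, ht⟩
    rw [Finset.card_erase_of_mem htmem, Finset.card_sdiff_of_subset (Finset.subset_univ _),
      Finset.card_univ, Fintype.card_fin]
    omega
  obtain ⟨P3, hP3none, hP3card, hP3sub, hP3disj, hP3cover⟩ :=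
    partition_exists (Finset.univ.erase j0) ((Finset.univ \ Iset).erase t) f3 hf3sum
  set P : Fin p → Finset (Fin k) := fun j => if j = j0 then {i, t} else P2 j ∪ P3 j with hP
  -- regions
  have hregit : ∀ z, z ∈ ({i, t} : Finset (Fin k)) → z = i ∨ z = t := by
    intro z hz
    rcases Finset.mem_insert.mp hz with h | h
    · exact Or.inl h
    · exact Or.inr (Finset.mem_singleton.mp h)
  have hreg2 : ∀ j, P2 j ⊆ Iset.erase i := hP2sub
  have hreg3 : ∀ j, P3 j ⊆ (Finset.univ \ Iset).erase t := hP3sub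
  have hreg23 : Disjoint (Iset.erase i) ((Finset.univ \ Iset).erase t) := by
    apply Finset.disjoint_left.mpr
    intro z hz hz'
    exact (Finset.mem_sdiff.mp (Finset.mem_of_mem_erase hz')).2 (Finset.mem_of_mem_erase hz)
  have hreg1_2 : Disjoint ({i, t} : Finset (Fin k)) (Iset.erase i) := by
    apply Finset.disjoint_left.mpr
    intro z hz hz'
    rcases hregit z hz with h | h
    · exact (Finset.mem_erase.mp hz').1 h
    · exact ht (h ▸ Finset.mem_of_mem_erase hz')
  have hreg1_3 : Disjoint ({i, t} : Finset (Fin k)) ((Finset.univ \ Iset).erase t) := by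
    apply Finset.disjoint_left.mpr
    intro z hz hz'
    rcases hregit z hz with h | h
    · exact (Finset.mem_sdiff.mp (Finset.mem_of_mem_erase hz')).2 (h ▸ hi)
    · exact (Finset.mem_erase.mp hz').1 h
  have hPdisj : ∀ j j', j ≠ j' → Disjoint (P j) (P j') := by
    intro j j' hne
    rw [hP]
    simp only
    by_cases h : j = j0 <;> by_cases h' : j' = j0
    · exact absurd (h.trans h'.symm) hne
    · rw [if_pos h, if_neg h']
      apply Finset.disjoint_union_right.mpr
      exact ⟨Finset.disjoint_of_subset_right (hreg2 j') hreg1_2,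
        Finset.disjoint_of_subset_right (hreg3 j') hreg1_3⟩
    · rw [if_neg h, if_pos h']
      apply Finset.disjoint_union_left.mpr
      exact ⟨(Finset.disjoint_of_subset_right (hreg2 j) hreg1_2).symm,
        (Finset.disjoint_of_subset_right (hreg3 j) hreg1_3).symm⟩
    · rw [if_neg h, if_neg h']
      apply Finset.disjoint_union_left.mpr
      constructor
      · apply Finset.disjoint_union_right.mpr
        exact ⟨hP2disj j j' hne, Finset.disjoint_of_subset_left (hreg2 j)
          (Finset.disjoint_of_subset_right (hreg3 j') hreg23)⟩
      · apply Finset.disjoint_union_right.mpr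
        exact ⟨Finset.disjoint_of_subset_left (hreg3 j)
          (Finset.disjoint_of_subset_right (hreg2 j') hreg23.symm), hP3disj j j' hne⟩
  have hPcard : ∀ j, (P j).card = a j := by
    intro j
    rw [hP]
    simp only
    by_cases h : j = j0
    · rw [if_pos h, Finset.card_insert_of_notMem (by simpa using hit),
        Finset.card_singleton, ha2 j]
    · rw [if_neg h]
      have hd23 : Disjoint (P2 j) (P3 j) := Finset.disjoint_of_subset_left (hreg2 j)
        (Finset.disjoint_of_subset_right (hreg3 j) hreg23)
      rw [Finset.card_union_of_disjoint hd23]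
      have hjmem : j ∈ Finset.univ.erase j0 := Finset.mem_erase.mpr ⟨h, Finset.mem_univ j⟩
      rw [hP2card j hjmem, hP3card j hjmem]
      have : f3 j = a j - cdist j := by rw [hf3]; simp only [if_neg h]
      rw [this]
      have hcle : cdist j ≤ a j := by
        rcases hcdcond j hjmem with hc | ⟨_, hc⟩
        · omega
        · exact hc
      omega
  have hPcover : Finset.univ.biUnion P = Finset.univ := by
    apply Finset.Subset.antisymm (Finset.subset_univ _)
    intro z _
    by_cases hz1 : z = i ∨ z = t
    · refine Finset.mem_biUnion.mpr ⟨j0, Finset.mem_univ j0, ?_⟩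
      rw [hP]
      simp only [if_pos rfl]
      rcases hz1 with h | h
      · exact Finset.mem_insert.mpr (Or.inl h)
      · exact Finset.mem_insert.mpr (Or.inr (Finset.mem_singleton.mpr h))
    · push_neg at hz1
      by_cases hz2 : z ∈ Iset
      · have : z ∈ Iset.erase i := Finset.mem_erase.mpr ⟨hz1.1, hz2⟩
        rw [← hP2cover] at this
        obtain ⟨j, hjmem, hjz⟩ := Finset.mem_biUnion.mp this
        refine Finset.mem_biUnion.mpr ⟨j, Finset.mem_univ j, ?_⟩
        rw [hP]
        simp only [if_neg (Finset.mem_erase.mp hjmem).1]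
        exact Finset.mem_union_left _ hjz
      · have : z ∈ (Finset.univ \ Iset).erase t :=
          Finset.mem_erase.mpr ⟨hz1.2, Finset.mem_sdiff.mpr ⟨Finset.mem_univ z, hz2⟩⟩
        rw [← hP3cover] at this
        obtain ⟨j, hjmem, hjz⟩ := Finset.mem_biUnion.mp this
        refine Finset.mem_biUnion.mpr ⟨j, Finset.mem_univ j, ?_⟩
        rw [hP]
        simp only [if_neg (Finset.mem_erase.mp hjmem).1]
        exact Finset.mem_union_right _ hjz
  -- the vertex partition of X
  set A : Fin p → Finset ℕ := fun j => (P j).image xe with hA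
  have hApart : IsAPartition p a A X := by
    refine ⟨?_, ?_, ?_⟩
    · intro j
      rw [hA]
      simp only
      rw [Finset.card_image_of_injective _ hxeinj, hPcard j]
    · intro j j' hne
      rw [hA]
      simp only
      rw [Finset.disjoint_image hxeinj]
      exact hPdisj j j' hne
    · rw [Finset.sup_eq_biUnion]
      have hbi : (Finset.univ.biUnion fun j => (P j).image xe) =
          (Finset.univ.biUnion P).image xe := by
        rw [Finset.biUnion_image]
      rw [hA]
      rw [hbi, hPcover]
      exact vmap_image_univ hX1 hVs hXsub
  have hcenter : ∀ j, X \ A j = (Finset.univ \ P j).image xe :=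
    fun j => image_compl hX1 hVd hVs hXsub (P j)
  -- the slot: X ∩ F = X \ A j0
  have hPj0 : P j0 = {i, t} := by rw [hP]; simp
  have hAj0 : A j0 = {e i, xe t} := by
    rw [hA]
    simp only
    rw [hPj0, Finset.image_insert, Finset.image_singleton, hxei]
  have hslotC : X ∩ F = X \ A j0 := by
    rw [hAj0]
    apply Finset.Subset.antisymm
    · intro z hz
      rcases Finset.mem_inter.mp hz with ⟨hzX, hzF⟩
      rw [hF] at hzF
      rcases Finset.mem_union.mp hzF with h | h
      · rcases Finset.mem_sdiff.mp h with ⟨hzE, hzei⟩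
        apply Finset.mem_sdiff.mpr
        refine ⟨hzX, ?_⟩
        intro hzmem
        rcases Finset.mem_insert.mp hzmem with hh | hh
        · exact hzei (by rw [hh]; exact Finset.mem_singleton_self _)
        · rw [Finset.mem_singleton.mp hh] at hzE
          exact hxtE hzE
      · rw [Finset.mem_singleton.mp h] at hzX
        exact absurd hzX hwX
    · intro z hz
      rcases Finset.mem_sdiff.mp hz with ⟨hzX, hznot⟩
      have hznei : z ≠ e i := fun h => hznot (by rw [h]; simp)
      have hznxt : z ≠ xe t := fun h => hznot (by rw [h]; simp)
      -- z ∈ X and z ≠ xe t implies z ∈ CB ⊆ E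
      have hzCB : z ∈ CB := by
        have hzuniv : z ∈ Finset.univ.image xe := by
          rw [vmap_image_univ hX1 hVs hXsub]
          exact hzX
        obtain ⟨jz, _, hjz⟩ := Finset.mem_image.mp hzuniv
        have hjzt : jz ≠ t := by
          intro h
          rw [h] at hjz
          exact hznxt hjz.symm
        rw [← hjz, hxe_eq jz hjzt, hCB]
        exact Finset.mem_image_of_mem _ (Finset.mem_erase.mpr ⟨hjzt, Finset.mem_univ jz⟩)
      apply Finset.mem_inter.mpr
      refine ⟨hzX, ?_⟩
      rw [hF]
      apply Finset.mem_union_left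
      exact Finset.mem_sdiff.mpr ⟨hCBE hzCB, by simpa using hznei⟩
  -- classification of non-slot parts
  have hclass : ∀ j, j ≠ j0 →
      (2 ≤ ((P j) ∩ Iset).card ∨ ((P j).Nonempty ∧ ∀ x ∈ P j, x ∉ Iset)) := by
    intro j hj
    have hjmem : j ∈ Finset.univ.erase j0 := Finset.mem_erase.mpr ⟨hj, Finset.mem_univ j⟩
    have hPeq : P j = P2 j ∪ P3 j := by rw [hP]; simp only [if_neg hj]
    rcases hcdcond j hjmem with hc0 | ⟨hc2, hcle⟩
    · right
      have hP2e : P2 j = ∅ := by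
        have := hP2card j hjmem
        rw [hc0] at this
        exact Finset.card_eq_zero.mp this
      constructor
      · rw [← Finset.card_pos, hPcard j, ha2 j]; omega
      · intro x hx
        rw [hPeq, hP2e, Finset.empty_union] at hx
        exact (Finset.mem_sdiff.mp (Finset.mem_of_mem_erase (hP3sub j hx))).2
    · left
      have hsubI : P2 j ⊆ P j ∩ Iset := by
        intro z hz
        refine Finset.mem_inter.mpr ⟨?_, Finset.mem_of_mem_erase (hP2sub j hz)⟩
        rw [hPeq]
        exact Finset.mem_union_left _ hz
      calc 2 ≤ cdist j := hc2
        _ = (P2 j).card := (hP2card j hjmem).symm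
        _ ≤ ((P j) ∩ Iset).card := Finset.card_le_card hsubI
  -- sources
  have hsrcng : ∀ j : Fin p, ∃ petals : Finset (Finset ℕ), j ≠ j0 →
      (petals.card = s - 1 ∧ X ∉ petals ∧ petals ⊆ Hstar ∧
        (∀ G ∈ petals, X ∩ G = X \ A j) ∧
        (∀ G ∈ petals, ∀ G' ∈ petals, G ≠ G' → G ∩ G' = X \ A j)) := by
    intro j
    by_cases hj : j = j0
    · exact ⟨∅, fun hc => absurd hj hc⟩
    · have hBJ : Finset.univ \ P j ∈ J := hJcoset (P j) (hclass j hj)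
      obtain ⟨petals, hc1, hc2, hc3, hc4, hc5⟩ :=
        petals_of_J hVd hVs hProj hSun hXstar hXsub hX1 hBJ
      rw [← hcenter j] at hc4 hc5
      exact ⟨petals, fun _ => ⟨hc1, hc2, hc3, hc4, hc5⟩⟩
  choose src0 hsrc0 using hsrcng
  set src : Fin p → Finset (Finset ℕ) :=
    fun j => if j = j0 then {F} else src0 j with hsrc
  apply hfree
  apply buildSystem hpd (by omega : 1 ≤ k) hs a H hH X hXH A hApart src ?_ ?_ ?_ ?_
    {j0} ?_ ?_ ?_ j1 (by simp [hj01])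
  · intro j
    by_cases hj : j = j0
    · rw [hsrc]; simp only [if_pos hj]
      intro G hG
      rw [Finset.mem_singleton.mp hG]
      exact hFH
    · rw [hsrc]; simp only [if_neg hj]
      exact fun G hG => hsub (((hsrc0 j hj).2.2.1) hG)
  · intro j
    by_cases hj : j = j0
    · rw [hsrc]; simp only [if_pos hj]
      intro hG
      exact hFX (Finset.mem_singleton.mp hG).symm
    · rw [hsrc]; simp only [if_neg hj]
      exact (hsrc0 j hj).2.1
  · intro j G hG
    by_cases hj : j = j0
    · rw [hsrc] at hG; simp only [if_pos hj] at hG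
      rw [Finset.mem_singleton.mp hG, hj]
      exact hslotC
    · rw [hsrc] at hG; simp only [if_neg hj] at hG
      exact (hsrc0 j hj).2.2.2.1 G hG
  · intro j G hG G' hG' hne
    by_cases hj : j = j0
    · rw [hsrc] at hG hG'; simp only [if_pos hj] at hG hG'
      rw [Finset.mem_singleton.mp hG, Finset.mem_singleton.mp hG'] at hne
      exact absurd rfl hne
    · rw [hsrc] at hG hG'; simp only [if_neg hj] at hG hG'
      exact (hsrc0 j hj).2.2.2.2 G hG G' hG' hne
  · intro j hj
    rw [Finset.mem_singleton.mp hj, hsrc]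
    simp only [if_pos rfl]
    exact Finset.card_singleton _
  · intro j hj j' hj' hne G hG G' hG'
    rw [Finset.mem_singleton.mp hj, Finset.mem_singleton.mp hj'] at hne
    exact absurd rfl hne
  · intro j hj
    have hj0' : j ≠ j0 := by simpa using hj
    rw [hsrc]; simp only [if_neg hj0']
    rw [(hsrc0 j hj0').1]

end
end S19
namespace S19
noncomputable section
open Classical Finset

lemma final_ineq {k q h σ β : ℕ} (hk : 3 ≤ k) (hqk : q ≤ k) (hh1 : 1 ≤ h)
    (hhq : h + 1 ≤ q) (hσq : σ ≤ q) (hβ1 : 1 ≤ β) (hqβ : q * β ≤ σ * h) :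
    (k : ℝ) / ((k : ℝ) - 1) ≤ (σ : ℝ) / (β : ℝ) := by
  have hq1 : 1 ≤ q := by omega
  have hnat : k * β ≤ σ * (k - 1) := by
    have h1 : k * h ≤ q * (k - 1) := by
      have e1 : k * (q - 1) + k = k * q := by
        rw [← Nat.mul_succ]; congr 1; omega
      have e2 : q * (k - 1) + q = q * k := by
        rw [← Nat.mul_succ]; congr 1; omega
      have e3 : k * q = q * k := Nat.mul_comm k q
      have e4 : k * h ≤ k * (q - 1) := Nat.mul_le_mul_left k (by omega)
      omega
    have h2 : q * (k * β) ≤ q * (σ * (k - 1)) := by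
      calc q * (k * β) = k * (q * β) := by ring
        _ ≤ k * (σ * h) := Nat.mul_le_mul_left k hqβ
        _ = σ * (k * h) := by ring
        _ ≤ σ * (q * (k - 1)) := Nat.mul_le_mul_left σ h1
        _ = q * (σ * (k - 1)) := by ring
    exact Nat.le_of_mul_le_mul_left h2 (by omega)
  have hkR : (3 : ℝ) ≤ (k : ℝ) := by exact_mod_cast hk
  have hβR1 : (1 : ℝ) ≤ (β : ℝ) := by exact_mod_cast hβ1
  rw [div_le_div_iff₀ (by linarith) (by linarith)]
  have hcast : ((k * β : ℕ) : ℝ) ≤ ((σ * (k - 1) : ℕ) : ℝ) := by exact_mod_cast hnat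
  push_cast [Nat.cast_sub (by omega : 1 ≤ k)] at hcast
  linarith

end
end S19
open S19
set_option maxHeartbeats 4000000 in
/-- Let `d ≥ p ≥ 2`, `k > p`, `s ≥ k·d + 1`, `a⃗` positive with
`Σ a_i = k`. Let `H ⊆ binom([n],k)` contain no `(a⃗,d)`-Δ-system, and let `H*` be an
`s`-homogeneous subgraph of `H` with pattern `J`, where `r(J) = k-1` and `J` has at most
`k-2` sets of size `k-1`. Then `ω_H(E) ≥ k/(k-1)` for every `E ∈ H*`. -/
theorem stmt19 (n p k d s : ℕ) (hp : 2 ≤ p) (hpd : p ≤ d) (hpk : p < k)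
    (hs : k * d + 1 ≤ s)
    (a : Fin p → ℕ) (ha : ∀ i, 0 < a i) (hsum : ∑ i, a i = k)
    (H Hstar : Finset (Finset ℕ)) (J : Finset (Finset (Fin k)))
    (hH : H ⊆ Finset.powersetCard k (Finset.Icc 1 n))
    (hfree : ¬ ContainsADSystem p a d H)
    (hsub : Hstar ⊆ H)
    (hhom : IsHomogeneousWith n k s Hstar J)
    (hrank : patternRank J = k - 1)
    (hJ : (J.filter (fun A => A.card = k - 1)).card ≤ k - 2) :
    ∀ E ∈ Hstar, (k : ℝ) / ((k : ℝ) - 1) ≤ weight k H E := by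
  classical
  intro E hE
  obtain ⟨V, hVd, hVs, hV1, hUnivJ, hProj, hJint, hSun⟩ := hhom
  have hk3 : 3 ≤ k := by omega
  have hd2 : 2 ≤ d := le_trans hp hpd
  have hEH : E ∈ H := hsub hE
  have hEsub : E ⊆ Finset.Icc 1 n := (Finset.mem_powersetCard.mp (hH hEH)).1
  have hEcard : E.card = k := (Finset.mem_powersetCard.mp (hH hEH)).2
  have hE1 : ∀ i, (E ∩ V i).card = 1 := hV1 E hE
  -- index classes
  set Iset : Finset (Fin k) :=
    Finset.univ.filter (fun x => Finset.univ.erase x ∉ J) with hIs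
  have hIdef : ∀ x, x ∈ Iset ↔ Finset.univ.erase x ∉ J := by
    intro x; rw [hIs]; simp
  set q := Iset.card with hqdef
  have hqk : q ≤ k := by
    rw [hqdef]
    calc Iset.card ≤ (Finset.univ : Finset (Fin k)).card :=
          Finset.card_le_card (Finset.subset_univ _)
      _ = k := by rw [Finset.card_univ, Fintype.card_fin]
  have hSsplit : (Finset.univ.filter (fun x : Fin k => Finset.univ.erase x ∉ J)).card
      + (Finset.univ.filter (fun x : Fin k => ¬ Finset.univ.erase x ∉ J)).card = k := by
    rw [Finset.card_filter_add_card_filter_not, Finset.card_univ, Fintype.card_fin]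
  have hScard :
      (Finset.univ.filter (fun x : Fin k => ¬ Finset.univ.erase x ∉ J)).card ≤ k - 2 := by
    apply le_trans _ hJ
    apply Finset.card_le_card_of_injOn (fun x => Finset.univ.erase x)
    · intro x hx
      rcases Finset.mem_filter.mp hx with ⟨_, hxJ⟩
      rw [not_not] at hxJ
      apply Finset.mem_filter.mpr
      refine ⟨hxJ, ?_⟩
      rw [Finset.card_erase_of_mem (Finset.mem_univ x), Finset.card_univ, Fintype.card_fin]
    · intro x _ y _ hxy
      simp only at hxy
      by_contra hne
      have hmem : y ∈ Finset.univ.erase x :=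
        Finset.mem_erase.mpr ⟨fun hc => hne hc.symm, Finset.mem_univ y⟩
      rw [hxy] at hmem
      exact (Finset.mem_erase.mp hmem).1 rfl
  have hq2 : 2 ≤ q := by
    have h1 := hSsplit
    rw [← hIs, ← hqdef] at h1
    omega
  -- coset closure
  have hJcoset : ∀ P : Finset (Fin k),
      (2 ≤ (P ∩ Iset).card ∨ (P.Nonempty ∧ ∀ x ∈ P, x ∉ Iset)) → Finset.univ \ P ∈ J :=
    fun P hc => coset_mem hk3 hrank hUnivJ hJint Iset hIdef P.card P rfl hc
  -- the vertex map and the W-sets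
  set e : Fin k → ℕ := vmap V E with he
  have heinj : Function.Injective e := vmap_inj hE1 hVd
  set W : Fin k → Finset ℕ :=
    fun x => (Finset.Icc 1 n).filter (fun w => w ∉ E ∧ (E \ {e x}) ∪ {w} ∈ H) with hWdef
  have hdegW : ∀ x : Fin k, degSet H (E \ {e x}) = (W x).card + 1 := by
    intro x
    rw [hWdef]
    exact deg_structure hH hEH (vmap_mem hE1 x).1
  have hWmem : ∀ x : Fin k, ∀ w ∈ W x, w ∉ E ∧ (E \ {vmap V E x}) ∪ {w} ∈ H := by
    intro x w hw
    rw [hWdef] at hw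
    exact (Finset.mem_filter.mp hw).2
  have hWIcc : ∀ x, W x ⊆ Finset.Icc 1 n := by
    intro x
    rw [hWdef]
    exact Finset.filter_subset _ _
  -- part sizes
  set singles := Finset.univ.filter (fun j : Fin p => a j = 1) with hsingles
  set bigs := Finset.univ.filter (fun j : Fin p => ¬ a j = 1) with hbigs
  set m1 := singles.card with hm1
  have h2bigs : ∀ j ∈ bigs, 2 ≤ a j := by
    intro j hj
    rw [hbigs] at hj
    have h1 := (Finset.mem_filter.mp hj).2
    have h2 := ha j
    omega
  have hsingle1 : ∀ j ∈ singles, a j = 1 := by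
    intro j hj
    rw [hsingles] at hj
    exact (Finset.mem_filter.mp hj).2
  have hbigsum : ∑ j ∈ bigs, a j = k - m1 := by
    have hsp := Finset.sum_filter_add_sum_filter_not Finset.univ (fun j => a j = 1) a
    rw [hsum] at hsp
    have h1 : ∑ j ∈ singles, a j = m1 := by
      rw [Finset.sum_congr rfl hsingle1, Finset.sum_const, smul_eq_mul, mul_one, hm1]
    rw [← hsingles, ← hbigs, h1] at hsp
    omega
  have hm1k : m1 ≤ k := by
    have hsp := Finset.sum_filter_add_sum_filter_not Finset.univ (fun j => a j = 1) a
    rw [hsum] at hsp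
    have h1 : ∑ j ∈ singles, a j = m1 := by
      rw [Finset.sum_congr rfl hsingle1, Finset.sum_const, smul_eq_mul, mul_one, hm1]
    rw [← hsingles, h1] at hsp
    omega
  have hbig_ex : ∃ jb, jb ∈ bigs := by
    by_contra hc
    push_neg at hc
    have hall1 : ∀ j : Fin p, a j = 1 := by
      intro j
      by_contra h1
      exact hc j (by rw [hbigs]; exact Finset.mem_filter.mpr ⟨Finset.mem_univ j, h1⟩)
    have : ∑ j, a j = p := by
      rw [Finset.sum_congr rfl (fun j _ => hall1 j), Finset.sum_const, smul_eq_mul, mul_one,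
        Finset.card_univ, Fintype.card_fin]
    omega
  have hkm12 : 2 ≤ k - m1 := by
    obtain ⟨jb, hjb⟩ := hbig_ex
    calc 2 ≤ a jb := h2bigs jb hjb
      _ ≤ ∑ j ∈ bigs, a j := Finset.single_le_sum (fun j _ => Nat.zero_le _) hjb
      _ = k - m1 := hbigsum
  -- ====================== the main T1 machine ======================
  have key : ∀ c : ℕ, 2 ≤ c → c ≤ k - m1 → c ≤ q → q - c ≤ m1 →
      (Even c ∨ ∃ j ∈ bigs, 3 ≤ a j) → (k : ℝ) / ((k : ℝ) - 1) ≤ weight k H E := by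
    intro c hc2 hckm hcq hqcm hpar
    -- distribution of the heavy parts
    obtain ⟨cdist, hcd0, hcdcond, hcdsum⟩ := distr a bigs h2bigs c hc2 (by omega) hpar
    have hcdsumuniv : ∑ j, cdist j = c := by
      rw [← Finset.sum_subset (Finset.subset_univ bigs) (fun j _ hj => hcd0 j hj)]
      exact hcdsum
    -- Hall's theorem set-up
    set dummies := (Finset.range c).image (fun m => n + 1 + m) with hdum
    have hdumcard : dummies.card = c := by
      rw [hdum, Finset.card_image_of_injective _ (fun x y hxy => by omega), Finset.card_range]
    have hdumge : ∀ v ∈ dummies, n + 1 ≤ v := by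
      intro v hv
      rw [hdum] at hv
      obtain ⟨m, _, hm⟩ := Finset.mem_image.mp hv
      omega
    have hWdum : ∀ x : Fin k, Disjoint (W x) dummies := by
      intro x
      apply Finset.disjoint_left.mpr
      intro v hv hv'
      have h1 := Finset.mem_Icc.mp (hWIcc x hv)
      have h2 := hdumge v hv'
      omega
    set tfun : {x // x ∈ Iset} → Finset ℕ := fun x => W x.val ∪ dummies with htfun
    have hcardsub : (Finset.univ : Finset {x // x ∈ Iset}).card = q := by
      rw [Finset.card_univ, Fintype.card_coe]
    by_cases hall : ∀ s0 : Finset {x // x ∈ Iset}, s0.card ≤ (s0.biUnion tfun).card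
    · -- Hall succeeds: build the forbidden system, contradiction
      exfalso
      obtain ⟨f, hfinj, hft⟩ :=
        (Finset.all_card_le_biUnion_card_iff_existsInjective' tfun).mp hall
      set Treal := (Finset.univ : Finset {x // x ∈ Iset}).filter
        (fun x => f x ∉ dummies) with hTreal
      have hTdum : ((Finset.univ : Finset {x // x ∈ Iset}).filter
          (fun x => f x ∈ dummies)).card ≤ c := by
        rw [← hdumcard]
        apply Finset.card_le_card_of_injOn f
        · intro x hx
          exact (Finset.mem_filter.mp hx).2
        · intro x _ y _ hxy
          exact hfinj hxy
      have hTrealcard : q - c ≤ Treal.card := by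
        have hsp := Finset.card_filter_add_card_filter_not
          (s := (Finset.univ : Finset {x // x ∈ Iset})) (p := fun x => f x ∈ dummies)
        rw [hcardsub] at hsp
        have : Treal = (Finset.univ : Finset {x // x ∈ Iset}).filter
            (fun x => ¬ f x ∈ dummies) := rfl
        rw [this]
        omega
      obtain ⟨T0', hT0'sub, hT0'card⟩ := Finset.exists_subset_card_eq hTrealcard
      set T0 := T0'.image (fun x => x.val) with hT0
      have hT0card : T0.card = q - c := by
        rw [hT0, Finset.card_image_of_injOn (fun x _ y _ hxy => Subtype.ext hxy), hT0'card]
      have hT0I : T0 ⊆ Iset := by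
        intro x hx
        rw [hT0] at hx
        obtain ⟨x', _, hx'⟩ := Finset.mem_image.mp hx
        rw [← hx']
        exact x'.property
      set wf : Fin k → ℕ := fun x => if hx : x ∈ Iset then f ⟨x, hx⟩ else 0 with hwfdef
      have hwfval : ∀ x ∈ T0, ∃ hx : x ∈ Iset, wf x = f ⟨x, hx⟩ ∧ f ⟨x, hx⟩ ∈ W x := by
        intro x hx
        rw [hT0] at hx
        obtain ⟨x', hx'T, hx'⟩ := Finset.mem_image.mp hx
        have hxI : x ∈ Iset := hx' ▸ x'.property
        refine ⟨hxI, by rw [hwfdef]; simp only [dif_pos hxI], ?_⟩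
        have hxx' : (⟨x, hxI⟩ : {x // x ∈ Iset}) = x' := Subtype.ext hx'.symm
        rw [hxx']
        have h1 := hft x'
        rw [htfun] at h1
        simp only at h1
        rcases Finset.mem_union.mp h1 with h | h
        · have : x'.val = x := hx'
          rw [this] at h
          exact h
        · exact absurd h (Finset.mem_filter.mp (hT0'sub hx'T)).2
      have hwf : ∀ x ∈ T0, wf x ∉ E ∧ (E \ {vmap V E x}) ∪ {wf x} ∈ H := by
        intro x hx
        obtain ⟨hxI, hwfx, hfW⟩ := hwfval x hx
        have := hWmem x _ hfW
        rw [hwfx]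
        exact this
      have hwinj : ∀ x ∈ T0, ∀ y ∈ T0, wf x = wf y → x = y := by
        intro x hx y hy hxy
        obtain ⟨hxI, hwfx, _⟩ := hwfval x hx
        obtain ⟨hyI, hwfy, _⟩ := hwfval y hy
        rw [hwfx, hwfy] at hxy
        have := hfinj hxy
        exact congrArg Subtype.val this
      -- slot parts
      have hqcm1 : q - c ≤ singles.card := by rw [← hm1]; exact hqcm
      obtain ⟨slotparts, hslotsub', hslotcard'⟩ := Finset.exists_subset_card_eq hqcm1
      have hslotsub : ∀ j ∈ slotparts, a j = 1 :=
        fun j hj => hsingle1 j (hslotsub' hj)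
      have hslotcard : slotparts.card = T0.card := by rw [hslotcard', hT0card]
      have hcd0' : ∀ j, cdist j ≠ 0 → 2 ≤ a j := by
        intro j hj
        by_cases hjb : j ∈ bigs
        · exact h2bigs j hjb
        · exact absurd (hcd0 j hjb) hj
      have hcdcond' : ∀ j, cdist j = 0 ∨ (2 ≤ cdist j ∧ cdist j ≤ a j) := by
        intro j
        by_cases hjb : j ∈ bigs
        · exact hcdcond j hjb
        · exact Or.inl (hcd0 j hjb)
      have hcdsum' : ∑ j, cdist j = Iset.card - T0.card := by
        rw [hcdsumuniv, hT0card, ← hqdef]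
        omega
      have hT0le : T0.card ≤ Iset.card := by
        rw [hT0card, ← hqdef]
        omega
      exact t1_false hp hpd hpk hk3 hs a ha hsum hH hsub hfree hVd hVs hV1 hProj hSun hE
        hJcoset hT0I hwf hwinj hslotsub hslotcard hcd0' hcdcond' hcdsum' hT0le
    · -- Hall fails: the degrees are small, the weight is large
      push_neg at hall
      obtain ⟨s0, hs0⟩ := hall
      have hs0ne : s0.Nonempty := by
        rcases Finset.eq_empty_or_nonempty s0 with h | h
        · rw [h] at hs0; simp at hs0
        · exact h
      obtain ⟨x0, hx0⟩ := hs0ne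
      set σ := s0.card with hσdef
      set realpart := s0.biUnion (fun x => W x.val) with hreal
      have hbieq : s0.biUnion tfun = realpart ∪ dummies := by
        apply Finset.Subset.antisymm
        · intro v hv
          obtain ⟨x, hx, hvx⟩ := Finset.mem_biUnion.mp hv
          rw [htfun] at hvx
          simp only at hvx
          rcases Finset.mem_union.mp hvx with h | h
          · exact Finset.mem_union_left _ (Finset.mem_biUnion.mpr ⟨x, hx, h⟩)
          · exact Finset.mem_union_right _ h
        · intro v hv
          rcases Finset.mem_union.mp hv with h | h
          · obtain ⟨x, hx, hvx⟩ := Finset.mem_biUnion.mp h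
            refine Finset.mem_biUnion.mpr ⟨x, hx, ?_⟩
            rw [htfun]
            simp only
            exact Finset.mem_union_left _ hvx
          · refine Finset.mem_biUnion.mpr ⟨x0, hx0, ?_⟩
            rw [htfun]
            simp only
            exact Finset.mem_union_right _ h
      have hdisjrd : Disjoint realpart dummies := by
        apply Finset.disjoint_left.mpr
        intro v hv hv'
        rw [hreal] at hv
        obtain ⟨x, _, hvx⟩ := Finset.mem_biUnion.mp hv
        have h1 := Finset.mem_Icc.mp (hWIcc x.val hvx)
        have h2 := hdumge v hv'
        omega
      have hcards : realpart.card + c = (s0.biUnion tfun).card := by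
        rw [hbieq, Finset.card_union_of_disjoint hdisjrd, hdumcard]
      have hrealσ : realpart.card + c + 1 ≤ σ := by
        rw [hσdef]
        omega
      have hσq : σ ≤ q := by
        rw [hσdef, ← hcardsub]
        exact Finset.card_le_card (Finset.subset_univ s0)
      have hβ1 : 1 ≤ σ - c := by omega
      have hdegle : ∀ x ∈ s0, degSet H (E \ {e x.val}) ≤ σ - c := by
        intro x hx
        rw [hdegW x.val]
        have hWsub : W x.val ⊆ realpart := by
          intro v hv
          rw [hreal]
          exact Finset.mem_biUnion.mpr ⟨x, hx, hv⟩
        have := Finset.card_le_card hWsub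
        omega
      set T := s0.image (fun x => e x.val) with hT
      have hTsub : T ⊆ E := by
        intro v hv
        rw [hT] at hv
        obtain ⟨x, _, hx⟩ := Finset.mem_image.mp hv
        rw [← hx]
        exact (vmap_mem hE1 x.val).1
      have hTcard : T.card = σ := by
        rw [hT, Finset.card_image_of_injOn (fun x _ y _ hxy => Subtype.ext (heinj hxy)),
          hσdef]
      have hdegT : ∀ v ∈ T, degSet H (E \ {v}) ≤ σ - c := by
        intro v hv
        rw [hT] at hv
        obtain ⟨x, hxs, hx⟩ := Finset.mem_image.mp hv
        rw [← hx]
        exact hdegle x hxs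
      have hwl := weight_lower hH hEH T hTsub (σ - c) hβ1 hdegT
      rw [hTcard] at hwl
      have hfin : (k : ℝ) / ((k : ℝ) - 1) ≤ (σ : ℝ) / ((σ - c : ℕ) : ℝ) := by
        apply final_ineq hk3 hqk (h := q - c) (by omega) (by omega) hσq hβ1
        -- q * (σ - c) ≤ σ * (q - c)
        have e1 : q * (σ - c) + q * c = q * σ := by
          rw [← Nat.mul_add]
          congr 1
          omega
        have e2 : σ * (q - c) + σ * c = σ * q := by
          rw [← Nat.mul_add]
          congr 1
          omega
        have e3 : σ * c ≤ q * c := Nat.mul_le_mul_right c hσq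
        have e4 : q * σ = σ * q := Nat.mul_comm q σ
        omega
      exact le_trans hfin hwl
  -- ====================== case analysis ======================
  by_cases hT2 : m1 = 0 ∧ (∀ j, 2 ≤ a j → a j = 2) ∧ Odd q
  · -- T2 case
    obtain ⟨hm10, hall2, hqodd⟩ := hT2
    have ha2 : ∀ j, a j = 2 := by
      intro j
      by_cases h1 : a j = 1
      · exfalso
        have : j ∈ singles := by
          rw [hsingles]
          exact Finset.mem_filter.mpr ⟨Finset.mem_univ j, h1⟩
        have hse : singles = ∅ := Finset.card_eq_zero.mp (by rw [← hm1]; exact hm10)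
        rw [hse] at this
        exact Finset.notMem_empty j this
      · have := ha j
        exact hall2 j (by omega)
    have hkeven : Even k := by
      rw [← hsum, Finset.sum_congr rfl (fun j _ => ha2 j), Finset.sum_const, smul_eq_mul]
      exact ⟨Finset.univ.card, by ring⟩
    have hq3 : 3 ≤ q := by
      rcases hqodd with ⟨m, hm⟩
      omega
    have hqk1 : q ≤ k - 1 := by
      rcases hqodd with ⟨m, hm⟩
      rcases hkeven with ⟨l, hl⟩
      omega
    have htex : ∃ tt : Fin k, tt ∉ Iset := by
      have hcard : (Finset.univ \ Iset).card = k - q := by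
        rw [Finset.card_sdiff_of_subset (Finset.subset_univ _), Finset.card_univ, Fintype.card_fin,
          ← hqdef]
      have hpos : 0 < (Finset.univ \ Iset).card := by omega
      obtain ⟨tt, htt⟩ := Finset.card_pos.mp hpos
      exact ⟨tt, (Finset.mem_sdiff.mp htt).2⟩
    obtain ⟨tt, htt⟩ := htex
    have hdeg1 : ∀ x ∈ Iset, W x = ∅ := by
      intro x hx
      by_contra hne
      obtain ⟨w, hw⟩ := Finset.nonempty_of_ne_empty hne
      have hmem := hWmem x w hw
      exact t2_false hp hpd hk3 hs a ha2 hsum hH hsub hfree hVd hVs hV1 hProj hSun hE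
        hIdef hJcoset hx htt hmem.1 hmem.2 hq2 hqodd
    set T := Iset.image e with hT
    have hTsub : T ⊆ E := by
      intro v hv
      rw [hT] at hv
      obtain ⟨x, _, hx⟩ := Finset.mem_image.mp hv
      rw [← hx]
      exact (vmap_mem hE1 x).1
    have hTcard : T.card = q := by
      rw [hT, Finset.card_image_of_injective _ heinj, ← hqdef]
    have hdegT : ∀ v ∈ T, degSet H (E \ {v}) ≤ 1 := by
      intro v hv
      rw [hT] at hv
      obtain ⟨x, hxI, hx⟩ := Finset.mem_image.mp hv
      rw [← hx, hdegW x, hdeg1 x hxI]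
      simp
    have hwl := weight_lower hH hEH T hTsub 1 (le_refl 1) hdegT
    rw [hTcard] at hwl
    have hfin : (k : ℝ) / ((k : ℝ) - 1) ≤ (q : ℝ) / ((1 : ℕ) : ℝ) :=
      final_ineq hk3 hqk (h := 1) (le_refl 1) (by omega) (le_refl q) (le_refl 1)
        (by omega)
    exact le_trans hfin hwl
  · -- T1 cases
    by_cases hσ2 : ∀ j, 2 ≤ a j → a j = 2
    · have hbig2 : ∀ j ∈ bigs, a j = 2 := fun j hj => hσ2 j (h2bigs j hj)
      have hbig_even : Even (k - m1) := by
        rw [← hbigsum, Finset.sum_congr rfl hbig2, Finset.sum_const, smul_eq_mul]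
        exact ⟨bigs.card, by ring⟩
      by_cases hqe : Even q
      · apply key (min q (k - m1))
        · rcases le_total q (k - m1) with hle | hle
          · rw [min_eq_left hle]; omega
          · rw [min_eq_right hle]; omega
        · exact min_le_right _ _
        · exact min_le_left _ _
        · rcases le_total q (k - m1) with hle | hle
          · rw [min_eq_left hle]; omega
          · rw [min_eq_right hle]; omega
        · left
          rcases le_total q (k - m1) with hle | hle
          · rw [min_eq_left hle]; exact hqe
          · rw [min_eq_right hle]; exact hbig_even
      · have hqodd : Odd q := Nat.not_even_iff_odd.mp hqe
        have hm11 : 1 ≤ m1 := by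
          by_contra hc
          exact hT2 ⟨by omega, hσ2, hqodd⟩
        have hq3 : 3 ≤ q := by
          rcases hqodd with ⟨m, hm⟩
          omega
        apply key (min (q - 1) (k - m1))
        · rcases le_total (q - 1) (k - m1) with hle | hle
          · rw [min_eq_left hle]; omega
          · rw [min_eq_right hle]; omega
        · exact min_le_right _ _
        · exact le_trans (min_le_left _ _) (by omega)
        · rcases le_total (q - 1) (k - m1) with hle | hle
          · rw [min_eq_left hle]; omega
          · rw [min_eq_right hle]; omega
        · left
          rcases le_total (q - 1) (k - m1) with hle | hle
          · rw [min_eq_left hle]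
            rcases hqodd with ⟨m, hm⟩
            exact ⟨m, by omega⟩
          · rw [min_eq_right hle]; exact hbig_even
    · push_neg at hσ2
      obtain ⟨j3, h2j3, hne2⟩ := hσ2
      have h3j3 : 3 ≤ a j3 := by omega
      have hj3bigs : j3 ∈ bigs := by
        rw [hbigs]
        exact Finset.mem_filter.mpr ⟨Finset.mem_univ j3, by omega⟩
      apply key (min q (k - m1))
      · rcases le_total q (k - m1) with hle | hle
        · rw [min_eq_left hle]; omega
        · rw [min_eq_right hle]; omega
      · exact min_le_right _ _
      · exact min_le_left _ _
      · rcases le_total q (k - m1) with hle | hle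
        · rw [min_eq_left hle]; omega
        · rw [min_eq_right hle]; omega
      · exact Or.inr ⟨j3, hj3bigs, h3j3⟩
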